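/- arXiv:1809.00533 — 3 statements merged into one kernel-verified Lean document; each statement's English description precedes it below -/
import Mathlib

section
/- Legendre's relation holds: η₁ω₂ − η₂ω₁ = 2πi, where η_k are the basic quasiperiods associated to the basic periods ω₁, ω₂ of a lattice with Im(ω₂/ω₁) > 0. -/
open Complex

noncomputable section

/-- The lattice point `m·ω₁ + n·ω₂`. -/
def latticePt (ω₁ ω₂ : ℂ) (p : ℤ × ℤ) : ℂ := p.1 * ω₁ + p.2 * ω₂

/-- The lattice `ℤω₁ + ℤω₂` as a subset of `ℂ`. -/
def lattice (ω₁ ω₂ : ℂ) : Set ℂ := Set.range (latticePt ω₁ ω₂)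

/-- The Weierstrass zeta function of the lattice `ℤω₁ + ℤω₂`. -/
def zetaW (ω₁ ω₂ : ℂ) (z : ℂ) : ℂ :=
  1 / z + ∑' p : {q : ℤ × ℤ // q ≠ 0},
    (1 / (z - latticePt ω₁ ω₂ p.1) + 1 / latticePt ω₁ ω₂ p.1 + z / latticePt ω₁ ω₂ p.1 ^ 2)

/-- The complex absolute value, as an absolute value (the norm). -/
def Complex.abs : AbsoluteValue ℂ ℝ := NormedField.toAbsoluteValue ℂ

lemma Complex.abs_ofReal (r : ℝ) : Complex.abs (r : ℂ) = |r| := by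
  simp [Complex.abs, NormedField.toAbsoluteValue]

namespace LegendreAux
open intervalIntegral in
lemma edge_log_integral {p d : ℂ} (hp : p ≠ 0) (him : ((p + d) / p).im ≠ 0) :
    ∫ t in (0:ℝ)..1, d / (p + t * d) = Complex.log ((p + d) / p) := by
  set c : ℂ := (p + d) / p with hc
  have hcd : c - 1 = d / p := by rw [hc, div_sub_one hp]; ring
  have hslit : ∀ t : ℝ, t ∈ Set.uIcc (0:ℝ) 1 → (1 + (t:ℂ) * (c - 1)) ∈ slitPlane := by
    intro t ht
    rcases eq_or_ne t 0 with h0 | h0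
    · simp [h0, Complex.one_mem_slitPlane]
    · right
      have ht0 : (0:ℝ) ≤ t := by
        rw [Set.uIcc_of_le (by norm_num : (0:ℝ) ≤ 1)] at ht; exact ht.1
      have ht0' : 0 < t := lt_of_le_of_ne ht0 (Ne.symm h0)
      have : (1 + (t:ℂ) * (c - 1)).im = t * c.im := by
        simp [Complex.add_im, Complex.mul_im, Complex.sub_im]
      rw [this]
      exact mul_ne_zero (by exact_mod_cast ht0'.ne') him
  have key : ∀ t : ℝ, t ∈ Set.uIcc (0:ℝ) 1 →
      HasDerivAt (fun s : ℝ => Complex.log (1 + (s:ℂ) * (c - 1))) (d / (p + t * d)) t := by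
    intro t ht
    have hγ : HasDerivAt (fun s : ℝ => 1 + (s:ℂ) * (c - 1)) (c - 1) t := by
      simpa using ((hasDerivAt_id t).ofReal_comp.mul_const (c - 1)).const_add 1
    have hder := hγ.clog_real (hslit t ht)
    have hne : (1 + (t:ℂ) * (c - 1)) ≠ 0 := slitPlane_ne_zero (hslit t ht)
    have h2 : (1 + (t:ℂ) * (c - 1)) = (p + t * d) / p := by
      rw [hcd]; field_simp
    have hpd : p + (t:ℂ) * d ≠ 0 := by
      intro h; rw [h2, h, zero_div] at hne; exact hne rfl
    have heq : (c - 1) / (1 + (t:ℂ) * (c - 1)) = d / (p + t * d) := by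
      rw [h2, hcd]; field_simp
    rwa [heq] at hder
  have hcont : ContinuousOn (fun t : ℝ => d / (p + t * d)) (Set.uIcc (0:ℝ) 1) := by
    apply ContinuousOn.div continuousOn_const
    · fun_prop
    · intro t ht
      have hne : (1 + (t:ℂ) * (c - 1)) ≠ 0 := slitPlane_ne_zero (hslit t ht)
      intro h
      apply hne
      have : (1:ℂ) + t * (c - 1) = (p + t * d) / p := by
        rw [hcd]; field_simp
      rw [this, h, zero_div]
  have := integral_eq_sub_of_hasDerivAt key (hcont.intervalIntegrable)
  rw [this]
  norm_num


def pt (ω₁ ω₂ : ℂ) (a b : ℝ) : ℂ := a * ω₁ + b * ω₂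

variable {ω₁ ω₂ : ℂ}

lemma omega1_ne (hτ : 0 < (ω₂ / ω₁).im) : ω₁ ≠ 0 := by
  intro h; rw [h, div_zero] at hτ; simp at hτ

lemma exists_lb (hτ : 0 < (ω₂ / ω₁).im) :
    ∃ c > 0, ∀ a b : ℝ, c * max |a| |b| ≤ Complex.abs (pt ω₁ ω₂ a b) := by
  have hω₁ : ω₁ ≠ 0 := omega1_ne hτ
  set τ := ω₂ / ω₁ with hτdef
  have hω₂ : ω₂ = τ * ω₁ := by rw [hτdef, div_mul_cancel₀ _ hω₁]
  set s := τ.im with hs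
  set T := Complex.abs τ with hT
  have hs0 : 0 < s := hτ
  have hT0 : 0 ≤ T := Complex.abs.nonneg τ
  have habsω : 0 < Complex.abs ω₁ := Complex.abs.pos hω₁
  refine ⟨Complex.abs ω₁ * (s / (1 + T + s)), by positivity, ?_⟩
  intro a b
  have key : pt ω₁ ω₂ a b = ((a:ℂ) + (b:ℂ) * τ) * ω₁ := by rw [pt, hω₂]; ring
  rw [key, map_mul]
  set u := (a:ℂ) + (b:ℂ) * τ with hu
  set A := Complex.abs u with hA
  have hA0 : 0 ≤ A := Complex.abs.nonneg u
  have him : u.im = b * s := by simp [hu, hs]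
  have hre : u.re = a + b * τ.re := by simp [hu]
  have h1 : |b| * s ≤ A := by
    have := Complex.abs_im_le_norm u
    rw [him, abs_mul, abs_of_pos hs0] at this
    exact this
  have h2 : |a| ≤ A + |b| * T := by
    have h3 := Complex.abs_re_le_norm u
    rw [hre] at h3
    have h4 : |a| ≤ |a + b * τ.re| + |b * τ.re| := by
      have := abs_sub_abs_le_abs_sub (a + b * τ.re) (b * τ.re)
      simp at this
      calc |a| = |a + b*τ.re - b*τ.re| := by ring_nf
        _ ≤ |a + b*τ.re| + |b*τ.re| := abs_sub _ _
    have h5 : |b * τ.re| ≤ |b| * T := by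
      rw [abs_mul]
      exact mul_le_mul_of_nonneg_left (Complex.abs_re_le_norm τ) (abs_nonneg b)
    linarith [show ‖u‖ = A from rfl]
  have main : s / (1 + T + s) * (|a| ⊔ |b|) ≤ A := by
    rw [div_mul_eq_mul_div, div_le_iff₀ (by positivity)]
    rcases max_cases |a| |b| with ⟨hm, _⟩ | ⟨hm, _⟩ <;> rw [hm] <;>
      nlinarith [abs_nonneg a, abs_nonneg b]
  calc Complex.abs ω₁ * (s / (1 + T + s)) * (|a| ⊔ |b|)
      = s / (1 + T + s) * (|a| ⊔ |b|) * Complex.abs ω₁ := by ring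
    _ ≤ A * Complex.abs ω₁ := mul_le_mul_of_nonneg_right main habsω.le
    _ = Complex.abs u * Complex.abs ω₁ := rfl

lemma pt_inj (hτ : 0 < (ω₂ / ω₁).im) {a b a' b' : ℝ}
    (h : pt ω₁ ω₂ a b = pt ω₁ ω₂ a' b') : a = a' ∧ b = b' := by
  obtain ⟨c, hc, hlb⟩ := exists_lb hτ
  have h0 : pt ω₁ ω₂ (a - a') (b - b') = 0 := by
    simp only [pt] at h ⊢; push_cast; linear_combination h
  have := hlb (a - a') (b - b')
  rw [h0, map_zero] at this
  have hmax : max |a - a'| |b - b'| ≤ 0 := by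
    by_contra hh
    push_neg at hh
    nlinarith
  have ha : a = a' := by
    have h1 := le_antisymm ((le_max_left _ _).trans hmax) (abs_nonneg _)
    rw [abs_eq_zero] at h1; linarith
  have hb : b = b' := by
    have h1 := le_antisymm ((le_max_right _ _).trans hmax) (abs_nonneg _)
    rw [abs_eq_zero] at h1; linarith
  exact ⟨ha, hb⟩


lemma summable_M : Summable (fun q : {q : ℤ × ℤ // q ≠ 0} =>
    1 / (max |(q.1.1:ℝ)| |(q.1.2:ℝ)|) ^ (3:ℕ)) := by
  have h0 := EisensteinSeries.summable_one_div_norm_rpow (by norm_num : (2:ℝ) < 3)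
  have h1 : Summable (fun y : ℤ × ℤ => ‖(finTwoArrowEquiv ℤ).symm y‖ ^ (-(3:ℝ))) :=
    ((finTwoArrowEquiv ℤ).symm.summable_iff).mpr h0
  have h2 := h1.subtype {q : ℤ × ℤ | q ≠ 0}
  apply Summable.congr h2
  rintro ⟨⟨m, n⟩, hq⟩
  simp only [Function.comp_apply, finTwoArrowEquiv_symm_apply]
  rw [EisensteinSeries.norm_eq_max_natAbs]
  have hcast : ((max (![m, n] 0).natAbs (![m, n] 1).natAbs : ℕ) : ℝ)
      = max |(m:ℝ)| |(n:ℝ)| := by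
    simp [Nat.cast_max, Nat.cast_natAbs]
  rw [hcast]
  have hnn : (0:ℝ) ≤ max |(m:ℝ)| |(n:ℝ)| := le_max_of_le_left (abs_nonneg _)
  rw [show (-(3:ℝ)) = -((3:ℕ):ℝ) by norm_num, Real.rpow_neg hnn, Real.rpow_natCast, one_div]

lemma M_ge_one {m n : ℤ} (hq : ¬(m = 0 ∧ n = 0)) : 1 ≤ max |(m:ℝ)| |(n:ℝ)| := by
  rcases not_and_or.mp hq with h | h
  · exact le_max_of_le_left (by exact_mod_cast Int.one_le_abs (by exact_mod_cast h))
  · exact le_max_of_le_right (by exact_mod_cast Int.one_le_abs (by exact_mod_cast h))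

lemma latticePt_eq_pt (m n : ℤ) : latticePt ω₁ ω₂ (m, n) = pt ω₁ ω₂ (m:ℝ) (n:ℝ) := by
  simp [latticePt, pt]

section Bounds

variable {c : ℝ} {m n : ℤ} {a b : ℝ}

lemma w_lb (hlb : ∀ a b : ℝ, c * max |a| |b| ≤ Complex.abs (pt ω₁ ω₂ a b)) : c * max |(m:ℝ)| |(n:ℝ)| ≤ Complex.abs (latticePt ω₁ ω₂ (m, n)) := by
  rw [latticePt_eq_pt]; exact hlb _ _

lemma w_ne (hc : 0 < c) (hlb : ∀ a b : ℝ, c * max |a| |b| ≤ Complex.abs (pt ω₁ ω₂ a b))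
    (hq : ¬(m = 0 ∧ n = 0)) : latticePt ω₁ ω₂ (m, n) ≠ 0 := by
  have h1 := w_lb (ω₁ := ω₁) (ω₂ := ω₂) (m := m) (n := n) hlb
  have h2 := M_ge_one hq
  intro h
  rw [h, map_zero] at h1
  nlinarith

lemma zw_lb (hc : 0 < c) (hlb : ∀ a b : ℝ, c * max |a| |b| ≤ Complex.abs (pt ω₁ ω₂ a b))
    (hq : ¬(m = 0 ∧ n = 0)) (ha : |a| ≤ 1/2) (hb : |b| ≤ 1/2) : c * (max |(m:ℝ)| |(n:ℝ)| / 2) ≤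
    Complex.abs (pt ω₁ ω₂ a b - latticePt ω₁ ω₂ (m, n)) := by
  have hd : pt ω₁ ω₂ a b - latticePt ω₁ ω₂ (m, n) = pt ω₁ ω₂ (a - m) (b - n) := by
    rw [latticePt_eq_pt, pt, pt, pt]; push_cast; ring
  rw [hd]
  refine le_trans ?_ (hlb _ _)
  apply mul_le_mul_of_nonneg_left _ hc.le
  have h1 : |(m:ℝ)| - 1/2 ≤ |a - m| := by
    have := abs_sub_abs_le_abs_sub (m:ℝ) a
    have h2 : |(m:ℝ) - a| = |a - m| := abs_sub_comm _ _
    linarith [abs_sub_abs_le_abs_sub (m:ℝ) a]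
  have h2 : |(n:ℝ)| - 1/2 ≤ |b - n| := by
    have h2' : |(n:ℝ) - b| = |b - n| := abs_sub_comm _ _
    linarith [abs_sub_abs_le_abs_sub (n:ℝ) b]
  have h3 := M_ge_one hq
  rcases max_cases |(m:ℝ)| |(n:ℝ)| with ⟨hm, _⟩ | ⟨hm, _⟩ <;> rw [hm] at h3 ⊢
  · refine le_trans ?_ (le_max_left _ _); linarith
  · refine le_trans ?_ (le_max_right _ _); linarith

lemma zw_ne (hc : 0 < c) (hlb : ∀ a b : ℝ, c * max |a| |b| ≤ Complex.abs (pt ω₁ ω₂ a b))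
    (hq : ¬(m = 0 ∧ n = 0)) (ha : |a| ≤ 1/2) (hb : |b| ≤ 1/2) : pt ω₁ ω₂ a b - latticePt ω₁ ω₂ (m, n) ≠ 0 := by
  have h1 := zw_lb hc hlb hq ha hb
  have h2 := M_ge_one hq
  intro h
  rw [h, map_zero] at h1
  nlinarith

lemma z_ub (ha : |a| ≤ 1/2) (hb : |b| ≤ 1/2) : Complex.abs (pt ω₁ ω₂ a b) ≤ (Complex.abs ω₁ + Complex.abs ω₂) / 2 := by
  rw [pt]
  refine le_trans (Complex.abs.add_le _ _) ?_
  rw [map_mul, map_mul, Complex.abs_ofReal, Complex.abs_ofReal]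
  have h1 := Complex.abs.nonneg ω₁
  have h2 := Complex.abs.nonneg ω₂
  nlinarith [mul_le_mul_of_nonneg_right ha h1, mul_le_mul_of_nonneg_right hb h2,
    abs_nonneg a, abs_nonneg b]

lemma term_bound (hc : 0 < c) (hlb : ∀ a b : ℝ, c * max |a| |b| ≤ Complex.abs (pt ω₁ ω₂ a b))
    (hq : ¬(m = 0 ∧ n = 0)) (ha : |a| ≤ 1/2) (hb : |b| ≤ 1/2) :
    Complex.abs (1 / (pt ω₁ ω₂ a b - latticePt ω₁ ω₂ (m, n)) + 1 / latticePt ω₁ ω₂ (m, n)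
      + pt ω₁ ω₂ a b / latticePt ω₁ ω₂ (m, n) ^ 2) ≤
    (2 * ((Complex.abs ω₁ + Complex.abs ω₂) / 2) ^ 2 / c ^ 3) *
      (1 / (max |(m:ℝ)| |(n:ℝ)|) ^ (3:ℕ)) := by
  set z := pt ω₁ ω₂ a b
  set w := latticePt ω₁ ω₂ (m, n)
  set M := max |(m:ℝ)| |(n:ℝ)| with hM
  have hM1 : 1 ≤ M := M_ge_one hq
  have hwne : w ≠ 0 := w_ne hc hlb hq
  have hzwne : z - w ≠ 0 := zw_ne hc hlb hq ha hb
  have hid : 1 / (z - w) + 1 / w + z / w ^ 2 = z ^ 2 / (w ^ 2 * (z - w)) := by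
    field_simp
    ring
  rw [hid, map_div₀, map_mul, map_pow, map_pow]
  set R := (Complex.abs ω₁ + Complex.abs ω₂) / 2
  have hz := z_ub (ω₁ := ω₁) (ω₂ := ω₂) ha hb
  have hw := w_lb (m := m) (n := n) hlb
  have hzw := zw_lb hc hlb hq ha hb
  rw [← hM] at hw hzw
  have habz : (0:ℝ) ≤ Complex.abs z := Complex.abs.nonneg z
  have hR : 0 ≤ R := le_trans habz hz
  have hden : 0 < Complex.abs w ^ 2 * Complex.abs (z - w) := by
    apply mul_pos (pow_pos (Complex.abs.pos hwne) 2) (Complex.abs.pos hzwne)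
  rw [div_le_iff₀ hden]
  have key : (c * M) ^ 2 * (c * (M / 2)) ≤ Complex.abs w ^ 2 * Complex.abs (z - w) := by
    apply mul_le_mul (pow_le_pow_left₀ (by positivity) hw 2) hzw (by positivity)
      (by positivity)
  calc Complex.abs z ^ 2 ≤ R ^ 2 := pow_le_pow_left₀ habz hz 2
    _ = (2 * R ^ 2 / c ^ 3) * (1 / M ^ (3:ℕ)) * ((c * M) ^ 2 * (c * (M/2))) := by
        field_simp
    _ ≤ (2 * R ^ 2 / c ^ 3) * (1 / M ^ (3:ℕ)) * (Complex.abs w ^ 2 * Complex.abs (z - w)) := by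
        apply mul_le_mul_of_nonneg_left key (by positivity)


lemma pt_add (a b a' b' : ℝ) : pt ω₁ ω₂ a b + pt ω₁ ω₂ a' b' = pt ω₁ ω₂ (a+a') (b+b') := by
  simp only [pt]; push_cast; ring

/-- The local primitive of a single summand. -/
def phi (w u : ℂ) : ℂ := Complex.log (1 - u / w) + u / w + u ^ 2 / (2 * w ^ 2)

lemma slit_term (hτ : 0 < (ω₂ / ω₁).im) (hc : 0 < c)
    (hlb : ∀ a b : ℝ, c * max |a| |b| ≤ Complex.abs (pt ω₁ ω₂ a b))
    (hq : ¬(m = 0 ∧ n = 0)) (ha : |a| ≤ 1/2) (hb : |b| ≤ 1/2) :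
    (1 - pt ω₁ ω₂ a b / latticePt ω₁ ω₂ (m, n)) ∈ Complex.slitPlane := by
  set z := pt ω₁ ω₂ a b with hz
  set w := latticePt ω₁ ω₂ (m, n) with hw
  have hwne : w ≠ 0 := w_ne hc hlb hq
  rw [Complex.mem_slitPlane_iff]
  by_contra hcon
  push_neg at hcon
  obtain ⟨hre, him⟩ := hcon
  have him2 : (z / w).im = 0 := by
    have : (1 - z / w).im = -(z / w).im := by simp
    rw [this] at him; linarith
  set ρ := (z / w).re with hρ
  have hρ1 : 1 ≤ ρ := by
    have : (1 - z / w).re = 1 - ρ := by simp [hρ]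
    rw [this] at hre; linarith
  have hzw : z / w = (ρ : ℂ) := Complex.ext (by simp [hρ]) (by simp [him2])
  have hzρw : z = (ρ:ℂ) * w := by
    field_simp at hzw; linear_combination hzw
  have hwpt : w = pt ω₁ ω₂ (m:ℝ) (n:ℝ) := latticePt_eq_pt m n
  have hzpt : z = pt ω₁ ω₂ (ρ * m) (ρ * n) := by
    rw [hzρw, hwpt]; simp only [pt]; push_cast; ring
  have hab := pt_inj hτ (hz ▸ hzpt)
  rcases not_and_or.mp hq with h | h
  · have h1 : (1:ℝ) ≤ |(m:ℝ)| := by exact_mod_cast Int.one_le_abs (by exact_mod_cast h)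
    have : |a| = ρ * |(m:ℝ)| := by rw [hab.1, abs_mul, abs_of_pos (by linarith : (0:ℝ) < ρ)]
    nlinarith
  · have h1 : (1:ℝ) ≤ |(n:ℝ)| := by exact_mod_cast Int.one_le_abs (by exact_mod_cast h)
    have : |b| = ρ * |(n:ℝ)| := by rw [hab.2, abs_mul, abs_of_pos (by linarith : (0:ℝ) < ρ)]
    nlinarith

section Edge

variable {a₀ b₀ da db : ℝ}

lemma pt_line (t : ℝ) : pt ω₁ ω₂ a₀ b₀ + (t:ℂ) * pt ω₁ ω₂ da db
    = pt ω₁ ω₂ (a₀ + t * da) (b₀ + t * db) := by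
  simp only [pt]; push_cast; ring

lemma term_edge_cont (hc : 0 < c)
    (hlb : ∀ a b : ℝ, c * max |a| |b| ≤ Complex.abs (pt ω₁ ω₂ a b))
    (hq : ¬(m = 0 ∧ n = 0))
    (hbox : ∀ t : ℝ, t ∈ Set.uIcc (0:ℝ) 1 → |a₀ + t * da| ≤ 1/2 ∧ |b₀ + t * db| ≤ 1/2) :
    ContinuousOn (fun t : ℝ =>
      (1 / ((pt ω₁ ω₂ a₀ b₀ + (t:ℂ) * pt ω₁ ω₂ da db) - latticePt ω₁ ω₂ (m, n))
        + 1 / latticePt ω₁ ω₂ (m, n)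
        + (pt ω₁ ω₂ a₀ b₀ + (t:ℂ) * pt ω₁ ω₂ da db) / latticePt ω₁ ω₂ (m, n) ^ 2)
        * pt ω₁ ω₂ da db) (Set.uIcc (0:ℝ) 1) := by
  have hwne : latticePt ω₁ ω₂ (m, n) ≠ 0 := w_ne hc hlb hq
  have hline : ContinuousOn (fun t : ℝ => pt ω₁ ω₂ a₀ b₀ + (t:ℂ) * pt ω₁ ω₂ da db)
      (Set.uIcc (0:ℝ) 1) := by fun_prop
  have c1 : ContinuousOn (fun t : ℝ =>
      1 / ((pt ω₁ ω₂ a₀ b₀ + (t:ℂ) * pt ω₁ ω₂ da db) - latticePt ω₁ ω₂ (m, n)))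
      (Set.uIcc (0:ℝ) 1) := by
    apply ContinuousOn.div continuousOn_const (hline.sub continuousOn_const)
    intro t ht
    rw [Pi.sub_apply, pt_line]
    exact zw_ne hc hlb hq (hbox t ht).1 (hbox t ht).2
  exact ((c1.add continuousOn_const).add
    (hline.div continuousOn_const (fun t _ => pow_ne_zero 2 hwne))).mul continuousOn_const

lemma term_edge (hτ : 0 < (ω₂ / ω₁).im) (hc : 0 < c)
    (hlb : ∀ a b : ℝ, c * max |a| |b| ≤ Complex.abs (pt ω₁ ω₂ a b))
    (hq : ¬(m = 0 ∧ n = 0))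
    (hbox : ∀ t : ℝ, t ∈ Set.uIcc (0:ℝ) 1 → |a₀ + t * da| ≤ 1/2 ∧ |b₀ + t * db| ≤ 1/2) :
    ∫ t in (0:ℝ)..1,
      (1 / ((pt ω₁ ω₂ a₀ b₀ + (t:ℂ) * pt ω₁ ω₂ da db) - latticePt ω₁ ω₂ (m, n))
        + 1 / latticePt ω₁ ω₂ (m, n)
        + (pt ω₁ ω₂ a₀ b₀ + (t:ℂ) * pt ω₁ ω₂ da db) / latticePt ω₁ ω₂ (m, n) ^ 2)
        * pt ω₁ ω₂ da db
      = phi (latticePt ω₁ ω₂ (m, n)) (pt ω₁ ω₂ (a₀ + da) (b₀ + db))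
        - phi (latticePt ω₁ ω₂ (m, n)) (pt ω₁ ω₂ a₀ b₀) := by
  set w := latticePt ω₁ ω₂ (m, n) with hw
  set P₀ := pt ω₁ ω₂ a₀ b₀ with hP₀
  set D := pt ω₁ ω₂ da db with hD
  have hwne : w ≠ 0 := w_ne hc hlb hq
  have key : ∀ t : ℝ, t ∈ Set.uIcc (0:ℝ) 1 →
      HasDerivAt (fun s : ℝ => phi w (P₀ + (s:ℂ) * D))
        ((1 / ((P₀ + (t:ℂ) * D) - w) + 1 / w + (P₀ + (t:ℂ) * D) / w ^ 2) * D) t := by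
    intro t ht
    set z := P₀ + (t:ℂ) * D with hzdef
    have hzpt : z = pt ω₁ ω₂ (a₀ + t * da) (b₀ + t * db) := pt_line t
    have hslit : (1 - z / w) ∈ Complex.slitPlane := by
      rw [hzpt]; exact slit_term hτ hc hlb hq (hbox t ht).1 (hbox t ht).2
    have hzwne : z - w ≠ 0 := by
      rw [hzpt]; exact zw_ne hc hlb hq (hbox t ht).1 (hbox t ht).2
    have hlin : HasDerivAt (fun s : ℝ => P₀ + (s:ℂ) * D) D t := by
      simpa using ((hasDerivAt_id t).ofReal_comp.mul_const D).const_add P₀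
    have h1 : HasDerivAt (fun s : ℝ => 1 - (P₀ + (s:ℂ) * D) / w) (-(D / w)) t :=
      ((hlin.div_const w).const_sub 1)
    have hlog : HasDerivAt (fun s : ℝ => Complex.log (1 - (P₀ + (s:ℂ) * D) / w))
        (-(D / w) / (1 - z / w)) t := h1.clog_real hslit
    have h2 : HasDerivAt (fun s : ℝ => (P₀ + (s:ℂ) * D) / w) (D / w) t := hlin.div_const w
    have h3 : HasDerivAt (fun s : ℝ => (P₀ + (s:ℂ) * D) ^ 2 / (2 * w ^ 2))
        ((D * z + z * D) / (2 * w ^ 2)) t := by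
      have hsq : HasDerivAt (fun s : ℝ => (P₀ + (s:ℂ) * D) ^ 2) (D * z + z * D) t := by
        have := hlin.mul hlin
        simpa [hzdef, sq, Pi.mul_def] using this
      exact hsq.div_const (2 * w ^ 2)
    have hsum := (hlog.add h2).add h3
    have hwz : w - z ≠ 0 := fun h => hzwne (by rw [← neg_sub w z, h, neg_zero])
    have hrw : -(D / w) / (1 - z / w) = D / (z - w) := by
      rw [show (1:ℂ) - z / w = (w - z) / w by field_simp]
      field_simp
      ring
    have heq : -(D / w) / (1 - z / w) + D / w + (D * z + z * D) / (2 * w ^ 2)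
        = (1 / (z - w) + 1 / w + z / w ^ 2) * D := by
      rw [hrw]
      field_simp
      ring
    rw [heq] at hsum
    exact hsum
  have hint : IntervalIntegrable _ MeasureTheory.volume (0:ℝ) 1 :=
    (term_edge_cont hc hlb hq hbox).intervalIntegrable
  have := intervalIntegral.integral_eq_sub_of_hasDerivAt key hint
  rw [this]
  have e1 : P₀ + ((1:ℝ):ℂ) * D = pt ω₁ ω₂ (a₀ + da) (b₀ + db) := by
    rw [pt_line]; norm_num
  have e0 : P₀ + ((0:ℝ):ℂ) * D = pt ω₁ ω₂ a₀ b₀ := by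
    rw [pt_line]; norm_num
  rw [e1, e0]

end Edge

end Bounds

lemma log_neg_im_pos {x : ℂ} (hx : 0 < x.im) :
    Complex.log (-x) = Complex.log x - Real.pi * I := by
  apply Complex.ext
  · simp [Complex.log_re]
  · simp only [Complex.log_im, Complex.sub_im, Complex.mul_im, Complex.ofReal_re,
      Complex.I_im, Complex.ofReal_im, Complex.I_re]
    rw [Complex.arg_neg_eq_arg_sub_pi_of_im_pos hx]
    ring

lemma log_neg_im_neg {x : ℂ} (hx : x.im < 0) :
    Complex.log (-x) = Complex.log x + Real.pi * I := by
  apply Complex.ext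
  · simp [Complex.log_re]
  · simp only [Complex.log_im, Complex.add_im, Complex.mul_im, Complex.ofReal_re,
      Complex.I_im, Complex.ofReal_im, Complex.I_re]
    rw [Complex.arg_neg_eq_arg_add_pi_of_im_neg hx]
    ring

lemma pt_ne_zero (hτ : 0 < (ω₂ / ω₁).im) {a b : ℝ} (ha : a ≠ 0) : pt ω₁ ω₂ a b ≠ 0 := by
  intro h
  have h0 : pt ω₁ ω₂ a b = pt ω₁ ω₂ 0 0 := by rw [h]; simp [pt]
  exact ha (pt_inj hτ h0).1

lemma not_int_half : ∀ k : ℤ, ((k:ℝ) ≠ -(1/2)) := by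
  intro k hk
  have : ((2*k : ℤ):ℝ) = ((-1 : ℤ):ℝ) := by push_cast; linarith
  have := Int.cast_injective this
  omega

lemma not_lattice_fst (hτ : 0 < (ω₂ / ω₁).im) (b : ℝ) :
    pt ω₁ ω₂ (-(1/2)) b ∉ lattice ω₁ ω₂ := by
  rintro ⟨⟨k, l⟩, hkl⟩
  rw [latticePt_eq_pt] at hkl
  exact not_int_half k (pt_inj hτ hkl).1

lemma not_lattice_snd (hτ : 0 < (ω₂ / ω₁).im) (a : ℝ) :
    pt ω₁ ω₂ a (-(1/2)) ∉ lattice ω₁ ω₂ := by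
  rintro ⟨⟨k, l⟩, hkl⟩
  rw [latticePt_eq_pt] at hkl
  exact not_int_half l (pt_inj hτ hkl).2

lemma ne_of_one_ne {q : ℤ × ℤ} (hq : q ≠ 0) : ¬(q.1 = 0 ∧ q.2 = 0) := by
  rintro ⟨h1, h2⟩
  exact hq (Prod.ext h1 h2)

lemma summable_T {c : ℝ} (hc : 0 < c)
    (hlb : ∀ a b : ℝ, c * max |a| |b| ≤ Complex.abs (pt ω₁ ω₂ a b))
    {a b : ℝ} (ha : |a| ≤ 1/2) (hb : |b| ≤ 1/2) :
    Summable (fun q : {q : ℤ × ℤ // q ≠ 0} =>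
      1 / (pt ω₁ ω₂ a b - latticePt ω₁ ω₂ q.1) + 1 / latticePt ω₁ ω₂ q.1
        + pt ω₁ ω₂ a b / latticePt ω₁ ω₂ q.1 ^ 2) := by
  apply Summable.of_norm_bounded
    (summable_M.mul_left (2 * ((Complex.abs ω₁ + Complex.abs ω₂) / 2) ^ 2 / c ^ 3))
  rintro ⟨⟨m, n⟩, hq⟩
  exact term_bound hc hlb (ne_of_one_ne hq) ha hb

lemma pt_ne_zero' (hτ : 0 < (ω₂ / ω₁).im) {a b : ℝ} (hb : b ≠ 0) : pt ω₁ ω₂ a b ≠ 0 := by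
  intro h
  have h0 : pt ω₁ ω₂ a b = pt ω₁ ω₂ 0 0 := by rw [h]; simp [pt]
  exact hb (pt_inj hτ h0).2

lemma I_integral (hτ : 0 < (ω₂ / ω₁).im) :
    (∫ t in (0:ℝ)..1,
      (ω₂ / (pt ω₁ ω₂ (1/2) (-(1/2)) + (t:ℂ) * ω₂)
        - ω₂ / (pt ω₁ ω₂ (-(1/2)) (-(1/2)) + (t:ℂ) * ω₂)
        - ω₁ / (pt ω₁ ω₂ (-(1/2)) (1/2) + (t:ℂ) * ω₁)
        + ω₁ / (pt ω₁ ω₂ (-(1/2)) (-(1/2)) + (t:ℂ) * ω₁)))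
      = 2 * Real.pi * I := by
  have hω₁ : ω₁ ≠ 0 := omega1_ne hτ
  set τ : ℂ := ω₂ / ω₁ with hτdef
  have hω₂ : ω₂ = τ * ω₁ := by rw [hτdef, div_mul_cancel₀ _ hω₁]
  set v1 := pt ω₁ ω₂ (-(1/2)) (-(1/2)) with hv1def
  set v2 := pt ω₁ ω₂ (1/2) (-(1/2)) with hv2def
  set v4 := pt ω₁ ω₂ (-(1/2)) (1/2) with hv4def
  have hv1 : v1 ≠ 0 := pt_ne_zero hτ (by norm_num)
  have hv2 : v2 ≠ 0 := pt_ne_zero hτ (by norm_num)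
  have hv4 : v4 ≠ 0 := pt_ne_zero' hτ (by norm_num)
  set D : ℂ := v2 / v1 with hDdef
  have hplus : (1 : ℂ) + τ ≠ 0 := by
    intro h
    have := congrArg Complex.im h
    simp at this
    linarith
  have hDτ : D = (τ - 1) / (1 + τ) := by
    rw [hDdef, hv1def, hv2def]
    simp only [pt]
    rw [hω₂]
    push_cast
    rw [div_eq_div_iff]
    · ring
    · intro h
      apply hplus
      have h2 : -(2⁻¹ : ℂ) * (1 + τ) * ω₁ = 0 := by rw [← h]; push_cast; ring
      rcases mul_eq_zero.mp h2 with h3 | h3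
      · rcases mul_eq_zero.mp h3 with h4 | h4
        · norm_num at h4
        · exact h4
      · exact absurd h3 hω₁
    · exact hplus
  have hDim : 0 < D.im := by
    rw [hDτ, Complex.div_im]
    have hN : 0 < Complex.normSq (1 + τ) := Complex.normSq_pos.mpr hplus
    have he : (τ - 1).im * (1 + τ).re / Complex.normSq (1 + τ)
        - (τ - 1).re * (1 + τ).im / Complex.normSq (1 + τ)
        = 2 * τ.im / Complex.normSq (1 + τ) := by
      rw [← sub_div]
      congr 1
      simp only [Complex.sub_im, Complex.sub_re, Complex.add_re, Complex.add_im,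
        Complex.one_re, Complex.one_im]
      ring
    rw [he]
    have hτ' : 0 < τ.im := hτ
    positivity
  have hD0 : D ≠ 0 := div_ne_zero hv2 hv1
  have hND : 0 < Complex.normSq D := Complex.normSq_pos.mpr hD0
  have hDinv_im : (D⁻¹).im < 0 := by
    rw [Complex.inv_im]
    apply div_neg_of_neg_of_pos (by linarith) hND
  -- the four ratios
  have hr1 : (v2 + ω₂) / v2 = -D⁻¹ := by
    have h3 : v2 + ω₂ = -v1 := by
      rw [hv1def, hv2def]; simp only [pt]; push_cast; ring
    rw [h3, hDdef, inv_div, neg_div]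
  have hr2 : (v1 + ω₂) / v1 = -D := by
    have h3 : v1 + ω₂ = -v2 := by
      rw [hv1def, hv2def]; simp only [pt]; push_cast; ring
    rw [h3, hDdef, neg_div]
  have hr3 : (v4 + ω₁) / v4 = D⁻¹ := by
    have h3 : v4 + ω₁ = -v1 := by
      rw [hv1def, hv4def]; simp only [pt]; push_cast; ring
    have h4 : v4 = -v2 := by
      rw [hv2def, hv4def]; simp only [pt]; push_cast; ring
    rw [h3, h4, hDdef, inv_div]
    rw [neg_div_neg_eq]
  have hr4 : (v1 + ω₁) / v1 = D := by
    have h3 : v1 + ω₁ = v2 := by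
      rw [hv1def, hv2def]; simp only [pt]; push_cast; ring
    rw [h3, hDdef]
  -- integrability of the four pieces
  have hcont : ∀ (p : ℂ) (d : ℂ), (∀ t : ℝ, t ∈ Set.uIcc (0:ℝ) 1 → p + (t:ℂ) * d ≠ 0) →
      IntervalIntegrable (fun t : ℝ => d / (p + (t:ℂ) * d)) MeasureTheory.volume 0 1 := by
    intro p d hne
    apply ContinuousOn.intervalIntegrable
    exact ContinuousOn.div continuousOn_const (by fun_prop) hne
  have hne1 : ∀ t : ℝ, t ∈ Set.uIcc (0:ℝ) 1 → v2 + (t:ℂ) * ω₂ ≠ 0 := by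
    intro t _
    rw [hv2def, show pt ω₁ ω₂ (1/2) (-(1/2)) + (t:ℂ) * ω₂ = pt ω₁ ω₂ (1/2) (-(1/2) + t) by
      simp only [pt]; push_cast; ring]
    exact pt_ne_zero hτ (by norm_num)
  have hne2 : ∀ t : ℝ, t ∈ Set.uIcc (0:ℝ) 1 → v1 + (t:ℂ) * ω₂ ≠ 0 := by
    intro t _
    rw [hv1def, show pt ω₁ ω₂ (-(1/2)) (-(1/2)) + (t:ℂ) * ω₂ = pt ω₁ ω₂ (-(1/2)) (-(1/2) + t) by
      simp only [pt]; push_cast; ring]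
    exact pt_ne_zero hτ (by norm_num)
  have hne3 : ∀ t : ℝ, t ∈ Set.uIcc (0:ℝ) 1 → v4 + (t:ℂ) * ω₁ ≠ 0 := by
    intro t _
    rw [hv4def, show pt ω₁ ω₂ (-(1/2)) (1/2) + (t:ℂ) * ω₁ = pt ω₁ ω₂ (-(1/2) + t) (1/2) by
      simp only [pt]; push_cast; ring]
    exact pt_ne_zero' hτ (by norm_num)
  have hne4 : ∀ t : ℝ, t ∈ Set.uIcc (0:ℝ) 1 → v1 + (t:ℂ) * ω₁ ≠ 0 := by
    intro t _
    rw [hv1def, show pt ω₁ ω₂ (-(1/2)) (-(1/2)) + (t:ℂ) * ω₁ = pt ω₁ ω₂ (-(1/2) + t) (-(1/2)) by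
      simp only [pt]; push_cast; ring]
    exact pt_ne_zero' hτ (by norm_num)
  have i1 := hcont v2 ω₂ hne1
  have i2 := hcont v1 ω₂ hne2
  have i3 := hcont v4 ω₁ hne3
  have i4 := hcont v1 ω₁ hne4
  rw [intervalIntegral.integral_add ((i1.sub i2).sub i3) i4,
    intervalIntegral.integral_sub (i1.sub i2) i3,
    intervalIntegral.integral_sub i1 i2]
  rw [edge_log_integral hv2 (by rw [hr1]; simp only [Complex.neg_im]; linarith),
    edge_log_integral hv1 (by rw [hr2]; simp only [Complex.neg_im]; linarith),
    edge_log_integral hv4 (by rw [hr3]; linarith),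
    edge_log_integral hv1 (by rw [hr4]; linarith)]
  rw [hr1, hr2, hr3, hr4]
  rw [log_neg_im_neg hDinv_im, log_neg_im_pos hDim]
  push_cast
  ring

def Tq (ω₁ ω₂ : ℂ) (q : {q : ℤ × ℤ // q ≠ 0}) (z : ℂ) : ℂ :=
  1 / (z - latticePt ω₁ ω₂ q.1) + 1 / latticePt ω₁ ω₂ q.1 + z / latticePt ω₁ ω₂ q.1 ^ 2

lemma zetaW_eq (ω₁ ω₂ z : ℂ) : zetaW ω₁ ω₂ z = 1 / z + ∑' q : {q : ℤ × ℤ // q ≠ 0},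
    Tq ω₁ ω₂ q z := rfl

/-- The combination of the four edge integrands for a single lattice summand. -/
def hq (ω₁ ω₂ : ℂ) (q : {q : ℤ × ℤ // q ≠ 0}) (t : ℝ) : ℂ :=
  Tq ω₁ ω₂ q (pt ω₁ ω₂ (1/2) (-(1/2)) + (t:ℂ) * pt ω₁ ω₂ 0 1) * pt ω₁ ω₂ 0 1
  - Tq ω₁ ω₂ q (pt ω₁ ω₂ (-(1/2)) (-(1/2)) + (t:ℂ) * pt ω₁ ω₂ 0 1) * pt ω₁ ω₂ 0 1
  - Tq ω₁ ω₂ q (pt ω₁ ω₂ (-(1/2)) (1/2) + (t:ℂ) * pt ω₁ ω₂ 1 0) * pt ω₁ ω₂ 1 0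
  + Tq ω₁ ω₂ q (pt ω₁ ω₂ (-(1/2)) (-(1/2)) + (t:ℂ) * pt ω₁ ω₂ 1 0) * pt ω₁ ω₂ 1 0

lemma boxA : ∀ t : ℝ, t ∈ Set.uIcc (0:ℝ) 1 → |(1:ℝ)/2 + t * 0| ≤ 1/2 ∧ |(-(1/2):ℝ) + t * 1| ≤ 1/2 := by
  intro t ht
  rw [Set.uIcc_of_le (by norm_num : (0:ℝ) ≤ 1)] at ht
  constructor <;> rw [abs_le] <;> constructor <;> nlinarith [ht.1, ht.2]

lemma boxB : ∀ t : ℝ, t ∈ Set.uIcc (0:ℝ) 1 → |(-(1/2):ℝ) + t * 0| ≤ 1/2 ∧ |(-(1/2):ℝ) + t * 1| ≤ 1/2 := by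
  intro t ht
  rw [Set.uIcc_of_le (by norm_num : (0:ℝ) ≤ 1)] at ht
  constructor <;> rw [abs_le] <;> constructor <;> nlinarith [ht.1, ht.2]

lemma boxC : ∀ t : ℝ, t ∈ Set.uIcc (0:ℝ) 1 → |(-(1/2):ℝ) + t * 1| ≤ 1/2 ∧ |(1:ℝ)/2 + t * 0| ≤ 1/2 := by
  intro t ht
  rw [Set.uIcc_of_le (by norm_num : (0:ℝ) ≤ 1)] at ht
  constructor <;> rw [abs_le] <;> constructor <;> nlinarith [ht.1, ht.2]

lemma boxD : ∀ t : ℝ, t ∈ Set.uIcc (0:ℝ) 1 → |(-(1/2):ℝ) + t * 1| ≤ 1/2 ∧ |(-(1/2):ℝ) + t * 0| ≤ 1/2 := by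
  intro t ht
  rw [Set.uIcc_of_le (by norm_num : (0:ℝ) ≤ 1)] at ht
  constructor <;> rw [abs_le] <;> constructor <;> nlinarith [ht.1, ht.2]

section Hq

variable {c : ℝ} (hc : 0 < c)
  (hlb : ∀ a b : ℝ, c * max |a| |b| ≤ Complex.abs (pt ω₁ ω₂ a b))
  (q : {q : ℤ × ℤ // q ≠ 0})

include hc hlb

lemma hq_cont : ContinuousOn (hq ω₁ ω₂ q) (Set.uIcc (0:ℝ) 1) := by
  obtain ⟨⟨m, n⟩, hq0⟩ := q
  have hqne : ¬(m = 0 ∧ n = 0) := ne_of_one_ne hq0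
  exact (((term_edge_cont hc hlb hqne boxA).sub (term_edge_cont hc hlb hqne boxB)).sub
    (term_edge_cont hc hlb hqne boxC)).add (term_edge_cont hc hlb hqne boxD)

lemma hq_int_zero (hτ : 0 < (ω₂ / ω₁).im) : ∫ t in (0:ℝ)..1, hq ω₁ ω₂ q t = 0 := by
  obtain ⟨⟨m, n⟩, hq0⟩ := q
  have hqne : ¬(m = 0 ∧ n = 0) := ne_of_one_ne hq0
  simp only [hq, Tq]
  have iA : IntervalIntegrable _ MeasureTheory.volume (0:ℝ) 1 :=
    (term_edge_cont hc hlb hqne boxA).intervalIntegrable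
  have iB : IntervalIntegrable _ MeasureTheory.volume (0:ℝ) 1 :=
    (term_edge_cont hc hlb hqne boxB).intervalIntegrable
  have iC : IntervalIntegrable _ MeasureTheory.volume (0:ℝ) 1 :=
    (term_edge_cont hc hlb hqne boxC).intervalIntegrable
  have iD : IntervalIntegrable _ MeasureTheory.volume (0:ℝ) 1 :=
    (term_edge_cont hc hlb hqne boxD).intervalIntegrable
  rw [intervalIntegral.integral_add ((iA.sub iB).sub iC) iD,
    intervalIntegral.integral_sub (iA.sub iB) iC,
    intervalIntegral.integral_sub iA iB]
  rw [term_edge hτ hc hlb hqne boxA, term_edge hτ hc hlb hqne boxB,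
    term_edge hτ hc hlb hqne boxC, term_edge hτ hc hlb hqne boxD]
  norm_num
  ring

lemma hq_bound {t : ℝ} (ht : t ∈ Set.uIcc (0:ℝ) 1) :
    ‖hq ω₁ ω₂ q t‖ ≤ 4 * (Complex.abs ω₁ + Complex.abs ω₂) *
      ((2 * ((Complex.abs ω₁ + Complex.abs ω₂) / 2) ^ 2 / c ^ 3) *
        (1 / (max |(q.1.1:ℝ)| |(q.1.2:ℝ)|) ^ (3:ℕ))) := by
  obtain ⟨⟨m, n⟩, hq0⟩ := q
  have hqne : ¬(m = 0 ∧ n = 0) := ne_of_one_ne hq0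
  set K := (2 * ((Complex.abs ω₁ + Complex.abs ω₂) / 2) ^ 2 / c ^ 3) *
      (1 / (max |(m:ℝ)| |(n:ℝ)|) ^ (3:ℕ)) with hK
  have hKnn : 0 ≤ K := by
    have h1 := M_ge_one hqne
    positivity
  have hd1 : Complex.abs (pt ω₁ ω₂ 0 1) ≤ Complex.abs ω₁ + Complex.abs ω₂ := by
    rw [show pt ω₁ ω₂ 0 1 = ω₂ by simp [pt]]
    linarith [Complex.abs.nonneg ω₁]
  have hd2 : Complex.abs (pt ω₁ ω₂ 1 0) ≤ Complex.abs ω₁ + Complex.abs ω₂ := by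
    rw [show pt ω₁ ω₂ 1 0 = ω₁ by simp [pt]]
    linarith [Complex.abs.nonneg ω₂]
  have piece : ∀ (a₀ b₀ da db : ℝ),
      (|a₀ + t * da| ≤ 1/2) → (|b₀ + t * db| ≤ 1/2) →
      (Complex.abs (pt ω₁ ω₂ da db) ≤ Complex.abs ω₁ + Complex.abs ω₂) →
      ‖Tq ω₁ ω₂ ⟨(m,n), hq0⟩ (pt ω₁ ω₂ a₀ b₀ + (t:ℂ) * pt ω₁ ω₂ da db) * pt ω₁ ω₂ da db‖
        ≤ (Complex.abs ω₁ + Complex.abs ω₂) * K := by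
    intro a₀ b₀ da db ha' hb' hd
    rw [norm_mul]
    have h1 : ‖Tq ω₁ ω₂ ⟨(m,n), hq0⟩ (pt ω₁ ω₂ a₀ b₀ + (t:ℂ) * pt ω₁ ω₂ da db)‖ ≤ K := by
      rw [pt_line]
      simp only [Tq]
      exact term_bound hc hlb hqne ha' hb'
    calc ‖Tq ω₁ ω₂ ⟨(m,n), hq0⟩ _‖ * ‖pt ω₁ ω₂ da db‖
        ≤ K * (Complex.abs ω₁ + Complex.abs ω₂) :=
          mul_le_mul h1 hd (norm_nonneg _) hKnn
      _ = (Complex.abs ω₁ + Complex.abs ω₂) * K := by ring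
  obtain ⟨hA1, hA2⟩ := boxA t ht
  obtain ⟨hB1, hB2⟩ := boxB t ht
  obtain ⟨hC1, hC2⟩ := boxC t ht
  obtain ⟨hD1, hD2⟩ := boxD t ht
  have pA := piece (1/2) (-(1/2)) 0 1 hA1 hA2 hd1
  have pB := piece (-(1/2)) (-(1/2)) 0 1 hB1 hB2 hd1
  have pC := piece (-(1/2)) (1/2) 1 0 hC1 hC2 hd2
  have pD := piece (-(1/2)) (-(1/2)) 1 0 hD1 hD2 hd2
  simp only [hq]
  set A := Tq ω₁ ω₂ ⟨(m,n), hq0⟩ (pt ω₁ ω₂ (1/2) (-(1/2)) + (t:ℂ) * pt ω₁ ω₂ 0 1) * pt ω₁ ω₂ 0 1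
  set B := Tq ω₁ ω₂ ⟨(m,n), hq0⟩ (pt ω₁ ω₂ (-(1/2)) (-(1/2)) + (t:ℂ) * pt ω₁ ω₂ 0 1) * pt ω₁ ω₂ 0 1
  set C := Tq ω₁ ω₂ ⟨(m,n), hq0⟩ (pt ω₁ ω₂ (-(1/2)) (1/2) + (t:ℂ) * pt ω₁ ω₂ 1 0) * pt ω₁ ω₂ 1 0
  set Dp := Tq ω₁ ω₂ ⟨(m,n), hq0⟩ (pt ω₁ ω₂ (-(1/2)) (-(1/2)) + (t:ℂ) * pt ω₁ ω₂ 1 0) * pt ω₁ ω₂ 1 0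
  have t1 := norm_add_le (A - B - C) Dp
  have t2 := norm_sub_le (A - B) C
  have t3 := norm_sub_le A B
  calc ‖A - B - C + Dp‖ ≤ ‖A‖ + ‖B‖ + ‖C‖ + ‖Dp‖ := by linarith
    _ ≤ 4 * (Complex.abs ω₁ + Complex.abs ω₂) * K := by linarith

end Hq

end LegendreAux

open LegendreAux

/-- **Legendre's relation**: `η₁ω₂ − η₂ω₁ = 2πi` for the basic quasiperiods `η₁, η₂`
of a lattice with `Im(ω₂/ω₁) > 0`. -/
theorem legendre_relation (ω₁ ω₂ : ℂ) (hτ : 0 < (ω₂ / ω₁).im)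
    (η₁ η₂ : ℂ)
    (h1 : ∀ z ∉ lattice ω₁ ω₂, zetaW ω₁ ω₂ (z + ω₁) - zetaW ω₁ ω₂ z = η₁)
    (h2 : ∀ z ∉ lattice ω₁ ω₂, zetaW ω₁ ω₂ (z + ω₂) - zetaW ω₁ ω₂ z = η₂) :
    η₁ * ω₂ - η₂ * ω₁ = 2 * Real.pi * I := by
  obtain ⟨c, hc, hlb⟩ := exists_lb hτ
  set fI : ℝ → ℂ := fun t =>
    ω₂ / (pt ω₁ ω₂ (1/2) (-(1/2)) + (t:ℂ) * ω₂)
      - ω₂ / (pt ω₁ ω₂ (-(1/2)) (-(1/2)) + (t:ℂ) * ω₂)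
      - ω₁ / (pt ω₁ ω₂ (-(1/2)) (1/2) + (t:ℂ) * ω₁)
      + ω₁ / (pt ω₁ ω₂ (-(1/2)) (-(1/2)) + (t:ℂ) * ω₁) with hfI
  set fS : ℝ → ℂ := fun t => ∑' q : {q : ℤ × ℤ // q ≠ 0}, hq ω₁ ω₂ q t with hfS
  have hbox_t : ∀ t ∈ Set.uIcc (0:ℝ) 1, |(-(1/2):ℝ) + t| ≤ 1/2 := by
    intro t ht
    rw [Set.uIcc_of_le (by norm_num : (0:ℝ) ≤ 1)] at ht
    rw [abs_le]; constructor <;> linarith [ht.1, ht.2]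
  have hd1 : pt ω₁ ω₂ 0 1 = ω₂ := by simp [pt]
  have hd2 : pt ω₁ ω₂ 1 0 = ω₁ := by simp [pt]
  -- pointwise decomposition
  have key : ∀ t ∈ Set.uIcc (0:ℝ) 1, η₁ * ω₂ - η₂ * ω₁ = fI t + fS t := by
    intro t ht
    have hb := hbox_t t ht
    have hz11 : pt ω₁ ω₂ (1/2) (-(1/2)) + (t:ℂ) * ω₂ = pt ω₁ ω₂ (1/2) (-(1/2)+t) := by
      simp only [pt]; push_cast; ring
    have hz12 : pt ω₁ ω₂ (-(1/2)) (-(1/2)) + (t:ℂ) * ω₂ = pt ω₁ ω₂ (-(1/2)) (-(1/2)+t) := by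
      simp only [pt]; push_cast; ring
    have hz21 : pt ω₁ ω₂ (-(1/2)) (1/2) + (t:ℂ) * ω₁ = pt ω₁ ω₂ (-(1/2)+t) (1/2) := by
      simp only [pt]; push_cast; ring
    have hz22 : pt ω₁ ω₂ (-(1/2)) (-(1/2)) + (t:ℂ) * ω₁ = pt ω₁ ω₂ (-(1/2)+t) (-(1/2)) := by
      simp only [pt]; push_cast; ring
    have e1 := h1 (pt ω₁ ω₂ (-(1/2)) (-(1/2)+t)) (not_lattice_fst hτ _)
    have e2 := h2 (pt ω₁ ω₂ (-(1/2)+t) (-(1/2))) (not_lattice_snd hτ _)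
    have s1 : pt ω₁ ω₂ (-(1/2)) (-(1/2)+t) + ω₁ = pt ω₁ ω₂ (1/2) (-(1/2)+t) := by
      simp only [pt]; push_cast; ring
    have s2 : pt ω₁ ω₂ (-(1/2)+t) (-(1/2)) + ω₂ = pt ω₁ ω₂ (-(1/2)+t) (1/2) := by
      simp only [pt]; push_cast; ring
    rw [s1] at e1
    rw [s2] at e2
    have S11 : Summable (fun q : {q : ℤ × ℤ // q ≠ 0} =>
        Tq ω₁ ω₂ q (pt ω₁ ω₂ (1/2) (-(1/2)+t))) := summable_T hc hlb (by rw [abs_le]; constructor <;> norm_num) hb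
    have S12 : Summable (fun q : {q : ℤ × ℤ // q ≠ 0} =>
        Tq ω₁ ω₂ q (pt ω₁ ω₂ (-(1/2)) (-(1/2)+t))) := summable_T hc hlb (by rw [abs_le]; constructor <;> norm_num) hb
    have S21 : Summable (fun q : {q : ℤ × ℤ // q ≠ 0} =>
        Tq ω₁ ω₂ q (pt ω₁ ω₂ (-(1/2)+t) (1/2))) := summable_T hc hlb hb (by rw [abs_le]; constructor <;> norm_num)
    have S22 : Summable (fun q : {q : ℤ × ℤ // q ≠ 0} =>
        Tq ω₁ ω₂ q (pt ω₁ ω₂ (-(1/2)+t) (-(1/2)))) := summable_T hc hlb hb (by rw [abs_le]; constructor <;> norm_num)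
    have hfS_eq : fS t = (∑' q : {q : ℤ × ℤ // q ≠ 0}, Tq ω₁ ω₂ q (pt ω₁ ω₂ (1/2) (-(1/2)+t))) * ω₂
        - (∑' q : {q : ℤ × ℤ // q ≠ 0}, Tq ω₁ ω₂ q (pt ω₁ ω₂ (-(1/2)) (-(1/2)+t))) * ω₂
        - (∑' q : {q : ℤ × ℤ // q ≠ 0}, Tq ω₁ ω₂ q (pt ω₁ ω₂ (-(1/2)+t) (1/2))) * ω₁
        + (∑' q : {q : ℤ × ℤ // q ≠ 0}, Tq ω₁ ω₂ q (pt ω₁ ω₂ (-(1/2)+t) (-(1/2)))) * ω₁ := by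
      rw [hfS]
      have step1 : (fun t' : ℝ => ∑' q : {q : ℤ × ℤ // q ≠ 0}, hq ω₁ ω₂ q t') t
          = ∑' q : {q : ℤ × ℤ // q ≠ 0},
            (Tq ω₁ ω₂ q (pt ω₁ ω₂ (1/2) (-(1/2)+t)) * ω₂
              - Tq ω₁ ω₂ q (pt ω₁ ω₂ (-(1/2)) (-(1/2)+t)) * ω₂
              - Tq ω₁ ω₂ q (pt ω₁ ω₂ (-(1/2)+t) (1/2)) * ω₁
              + Tq ω₁ ω₂ q (pt ω₁ ω₂ (-(1/2)+t) (-(1/2))) * ω₁) := by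
        refine tsum_congr fun q => ?_
        simp only [hq, hd1, hd2, hz11, hz12, hz21, hz22]
      rw [step1]
      rw [Summable.tsum_add (((S11.mul_right ω₂).sub (S12.mul_right ω₂)).sub (S21.mul_right ω₁))
          (S22.mul_right ω₁),
        Summable.tsum_sub ((S11.mul_right ω₂).sub (S12.mul_right ω₂)) (S21.mul_right ω₁),
        Summable.tsum_sub (S11.mul_right ω₂) (S12.mul_right ω₂),
        tsum_mul_right, tsum_mul_right, tsum_mul_right, tsum_mul_right]
    rw [hfS_eq]
    have hfI_t : fI t = ω₂ / pt ω₁ ω₂ (1/2) (-(1/2)+t) - ω₂ / pt ω₁ ω₂ (-(1/2)) (-(1/2)+t)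
        - ω₁ / pt ω₁ ω₂ (-(1/2)+t) (1/2) + ω₁ / pt ω₁ ω₂ (-(1/2)+t) (-(1/2)) := by
      rw [hfI]
      beta_reduce
      rw [hz11, hz12, hz21, hz22]
    rw [hfI_t]
    rw [zetaW_eq, zetaW_eq] at e1 e2
    linear_combination ω₁ * e2 - ω₂ * e1
  -- integrability of fI
  have hne1 : ∀ t : ℝ, t ∈ Set.uIcc (0:ℝ) 1 → pt ω₁ ω₂ (1/2) (-(1/2)) + (t:ℂ) * ω₂ ≠ 0 := by
    intro t _
    rw [show pt ω₁ ω₂ (1/2) (-(1/2)) + (t:ℂ) * ω₂ = pt ω₁ ω₂ (1/2) (-(1/2) + t) by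
      simp only [pt]; push_cast; ring]
    exact pt_ne_zero hτ (by norm_num)
  have hne2 : ∀ t : ℝ, t ∈ Set.uIcc (0:ℝ) 1 → pt ω₁ ω₂ (-(1/2)) (-(1/2)) + (t:ℂ) * ω₂ ≠ 0 := by
    intro t _
    rw [show pt ω₁ ω₂ (-(1/2)) (-(1/2)) + (t:ℂ) * ω₂ = pt ω₁ ω₂ (-(1/2)) (-(1/2) + t) by
      simp only [pt]; push_cast; ring]
    exact pt_ne_zero hτ (by norm_num)
  have hne3 : ∀ t : ℝ, t ∈ Set.uIcc (0:ℝ) 1 → pt ω₁ ω₂ (-(1/2)) (1/2) + (t:ℂ) * ω₁ ≠ 0 := by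
    intro t _
    rw [show pt ω₁ ω₂ (-(1/2)) (1/2) + (t:ℂ) * ω₁ = pt ω₁ ω₂ (-(1/2) + t) (1/2) by
      simp only [pt]; push_cast; ring]
    exact pt_ne_zero' hτ (by norm_num)
  have hne4 : ∀ t : ℝ, t ∈ Set.uIcc (0:ℝ) 1 → pt ω₁ ω₂ (-(1/2)) (-(1/2)) + (t:ℂ) * ω₁ ≠ 0 := by
    intro t _
    rw [show pt ω₁ ω₂ (-(1/2)) (-(1/2)) + (t:ℂ) * ω₁ = pt ω₁ ω₂ (-(1/2) + t) (-(1/2)) by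
      simp only [pt]; push_cast; ring]
    exact pt_ne_zero' hτ (by norm_num)
  have hfI_int : IntervalIntegrable fI MeasureTheory.volume 0 1 := by
    rw [hfI]
    apply ContinuousOn.intervalIntegrable
    exact (((ContinuousOn.div continuousOn_const (by fun_prop) hne1).sub
      (ContinuousOn.div continuousOn_const (by fun_prop) hne2)).sub
      (ContinuousOn.div continuousOn_const (by fun_prop) hne3)).add
      (ContinuousOn.div continuousOn_const (by fun_prop) hne4)
  have hfS_int : IntervalIntegrable fS MeasureTheory.volume 0 1 := by
    rw [intervalIntegrable_iff]
    have hconst : IntervalIntegrable (fun t : ℝ => (η₁ * ω₂ - η₂ * ω₁) - fI t)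
        MeasureTheory.volume 0 1 := intervalIntegrable_const.sub hfI_int
    rw [intervalIntegrable_iff] at hconst
    apply hconst.congr_fun _ measurableSet_uIoc
    intro t ht
    have ht' : t ∈ Set.uIcc (0:ℝ) 1 := Set.uIoc_subset_uIcc ht
    have := key t ht'
    rw [hfS]
    beta_reduce
    rw [hfS] at this
    beta_reduce at this
    linear_combination this
  -- value of the singular part
  have hIval : ∫ t in (0:ℝ)..1, fI t = 2 * Real.pi * I := by
    rw [hfI]
    exact I_integral hτ
  -- value of the series part
  have hSval : ∫ t in (0:ℝ)..1, fS t = 0 := by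
    rw [intervalIntegral.integral_of_le zero_le_one]
    have hmeas : ∀ q : {q : ℤ × ℤ // q ≠ 0}, MeasureTheory.AEStronglyMeasurable
        (hq ω₁ ω₂ q) (MeasureTheory.volume.restrict (Set.Ioc (0:ℝ) 1)) := by
      intro q
      apply ContinuousOn.aestronglyMeasurable _ measurableSet_Ioc
      apply (hq_cont hc hlb q).mono
      rw [Set.uIcc_of_le (by norm_num : (0:ℝ) ≤ 1)]
      exact Set.Ioc_subset_Icc_self
    have hbnd : ∀ q : {q : ℤ × ℤ // q ≠ 0},
        (∫⁻ t in Set.Ioc (0:ℝ) 1, ‖hq ω₁ ω₂ q t‖₊) ≤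
        ENNReal.ofReal (4 * (Complex.abs ω₁ + Complex.abs ω₂) *
          ((2 * ((Complex.abs ω₁ + Complex.abs ω₂) / 2) ^ 2 / c ^ 3) *
            (1 / (max |(q.1.1:ℝ)| |(q.1.2:ℝ)|) ^ (3:ℕ)))) := by
      intro q
      have step : (∫⁻ t in Set.Ioc (0:ℝ) 1, ‖hq ω₁ ω₂ q t‖₊) ≤
          ∫⁻ _ in Set.Ioc (0:ℝ) 1, ENNReal.ofReal (4 * (Complex.abs ω₁ + Complex.abs ω₂) *
            ((2 * ((Complex.abs ω₁ + Complex.abs ω₂) / 2) ^ 2 / c ^ 3) *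
              (1 / (max |(q.1.1:ℝ)| |(q.1.2:ℝ)|) ^ (3:ℕ)))) := by
        apply MeasureTheory.setLIntegral_mono measurable_const
        intro t ht
        rw [show ((‖hq ω₁ ω₂ q t‖₊ : ENNReal)) = ENNReal.ofReal ‖hq ω₁ ω₂ q t‖ from (ofReal_norm _).symm]
        apply ENNReal.ofReal_le_ofReal
        apply hq_bound hc hlb q
        rw [Set.uIcc_of_le (by norm_num : (0:ℝ) ≤ 1)]
        exact Set.Ioc_subset_Icc_self ht
      refine step.trans ?_
      rw [MeasureTheory.setLIntegral_const, Real.volume_Ioc]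
      norm_num
    have hsummable : Summable (fun q : {q : ℤ × ℤ // q ≠ 0} =>
        (4 * (Complex.abs ω₁ + Complex.abs ω₂) *
          ((2 * ((Complex.abs ω₁ + Complex.abs ω₂) / 2) ^ 2 / c ^ 3) *
            (1 / (max |(q.1.1:ℝ)| |(q.1.2:ℝ)|) ^ (3:ℕ)))).toNNReal) := by
      apply Summable.toNNReal
      exact (summable_M.mul_left _).mul_left _
    have hne_top : (∑' q : {q : ℤ × ℤ // q ≠ 0},
        ∫⁻ t in Set.Ioc (0:ℝ) 1, ‖hq ω₁ ω₂ q t‖₊) ≠ ⊤ := by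
      apply ne_top_of_le_ne_top _ (ENNReal.tsum_le_tsum hbnd)
      exact ENNReal.tsum_coe_ne_top_iff_summable.mpr hsummable
    rw [hfS]
    rw [MeasureTheory.integral_tsum hmeas hne_top]
    have hzero : ∀ q : {q : ℤ × ℤ // q ≠ 0},
        ∫ t in Set.Ioc (0:ℝ) 1, hq ω₁ ω₂ q t = 0 := by
      intro q
      rw [← intervalIntegral.integral_of_le zero_le_one]
      exact hq_int_zero hc hlb q hτ
    rw [tsum_congr hzero, tsum_zero]
  calc η₁ * ω₂ - η₂ * ω₁ = ∫ _ in (0:ℝ)..1, (η₁ * ω₂ - η₂ * ω₁) := by simp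
    _ = ∫ t in (0:ℝ)..1, (fI t + fS t) := intervalIntegral.integral_congr key
    _ = (∫ t in (0:ℝ)..1, fI t) + ∫ t in (0:ℝ)..1, fS t :=
        intervalIntegral.integral_add hfI_int hfS_int
    _ = 2 * Real.pi * I := by rw [hIval, hSval, add_zero]
end
end

section
/- Clausen's formula holds: (₂F₁(a, b; a+b+1/2; z))² = ₃F₂(2a, 2b, a+b; 2a+2b, a+b+1/2; z) for |z| < 1 (assuming the lower parameters are not nonpositive integers). -/
open Complex

noncomputable section

/-- The Pochhammer symbol `(a)_n`. -/
def poch (a : ℂ) : ℕ → ℂ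
  | 0 => 1
  | n + 1 => poch a n * (a + n)

/-- The Gauss hypergeometric function `₂F₁(a, b; c; z)` defined by its power series. -/
def F21 (a b c z : ℂ) : ℂ :=
  ∑' n : ℕ, poch a n * poch b n / poch c n * z ^ n / (Nat.factorial n)

/-- The generalized hypergeometric function `₃F₂(α, β, γ; δ, ε; z)`. -/
def F32 (α β γ δ ε z : ℂ) : ℂ :=
  ∑' n : ℕ, poch α n * poch β n * poch γ n / (poch δ n * poch ε n) * z ^ n / (Nat.factorial n)

namespace ClausenAux

lemma poch_zero (x : ℂ) : poch x 0 = 1 := rfl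

lemma poch_succ (x : ℂ) (n : ℕ) : poch x (n + 1) = poch x n * (x + n) := rfl

lemma poch_ne_zero {x : ℂ} (h : ∀ n : ℕ, x + n ≠ 0) (n : ℕ) : poch x n ≠ 0 := by
  induction n with
  | zero => simp [poch]
  | succ m ih => exact mul_ne_zero ih (h m)

lemma fact_ne_zero (n : ℕ) : ((Nat.factorial n : ℕ) : ℂ) ≠ 0 :=
  Nat.cast_ne_zero.mpr n.factorial_ne_zero

/-- The Cauchy-product summand (coefficient part): `Fc a b k j` corresponds to
`F(k+j, k)` in the telescoping proof. -/
def Fc (a b : ℂ) (k j : ℕ) : ℂ :=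
  poch a k * poch b k * poch a j * poch b j /
    ((Nat.factorial k : ℂ) * (Nat.factorial j : ℂ)
      * poch (a + b + 1 / 2) k * poch (a + b + 1 / 2) j)

/-- The Cauchy product coefficient. -/
def Dd (a b : ℂ) (n : ℕ) : ℂ := ∑ k ∈ Finset.range (n + 1), Fc a b k (n - k)

/-- The closed form (coefficient of the ₃F₂ side). -/
def Cc (a b : ℂ) (n : ℕ) : ℂ :=
  poch (2 * a) n * poch (2 * b) n * poch (a + b) n /
    ((Nat.factorial n : ℂ) * poch (2 * a + 2 * b) n * poch (a + b + 1 / 2) n)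

/-- The Zeilberger certificate polynomial. -/
def qq (a b : ℂ) (n k : ℕ) : ℂ :=
  (k : ℂ) * ((a + b - 1 / 2) * (2 * a + 2 * b + 3 * n + 2)
    + 3 * ((n : ℂ) + 1) * k - 2 * (k : ℂ) ^ 2)

set_option maxHeartbeats 1000000 in
/-- Generic form of the key local identity, with the Pochhammer values abstracted. -/
lemma key_abstract (a b Pak Pbk Paj Pbj Pck Pcj Kf Jf X Y : ℂ)
    (hck : Pck ≠ 0) (hcj : Pcj ≠ 0) (hfk : Kf ≠ 0) (hfj : Jf ≠ 0)
    (hk1 : X + 1 ≠ 0) (hj1 : Y + 1 ≠ 0)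
    (hcj' : a + b + 1 / 2 + Y ≠ 0) (hck' : a + b + 1 / 2 + X ≠ 0) :
    (2 * a + (X + Y)) * (2 * b + (X + Y)) * (a + b + (X + Y)) *
        (Pak * Pbk * Paj * Pbj / (Kf * Jf * Pck * Pcj))
      - ((X + Y) + 1) * (2 * a + 2 * b + (X + Y)) * (a + b + 1 / 2 + (X + Y)) *
        (Pak * Pbk * (Paj * (a + Y)) * (Pbj * (b + Y)) /
          (Kf * ((Y + 1) * Jf) * Pck * (Pcj * (a + b + 1 / 2 + Y))))
    = ((X + 1) * ((a + b - 1 / 2) * (2 * a + 2 * b + 3 * (X + Y) + 2)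
          + 3 * ((X + Y) + 1) * (X + 1) - 2 * (X + 1) ^ 2)) *
        ((Pak * (a + X)) * (Pbk * (b + X)) * Paj * Pbj /
          (((X + 1) * Kf) * Jf * (Pck * (a + b + 1 / 2 + X)) * Pcj))
      - (X * ((a + b - 1 / 2) * (2 * a + 2 * b + 3 * (X + Y) + 2)
          + 3 * ((X + Y) + 1) * X - 2 * X ^ 2)) *
        (Pak * Pbk * (Paj * (a + Y)) * (Pbj * (b + Y)) /
          (Kf * ((Y + 1) * Jf) * Pck * (Pcj * (a + b + 1 / 2 + Y)))) := by
  have hd1 : Kf * Jf * Pck * Pcj ≠ 0 :=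
    mul_ne_zero (mul_ne_zero (mul_ne_zero hfk hfj) hck) hcj
  have hd2 : Kf * ((Y + 1) * Jf) * Pck * (Pcj * (a + b + 1 / 2 + Y)) ≠ 0 :=
    mul_ne_zero (mul_ne_zero (mul_ne_zero hfk (mul_ne_zero hj1 hfj)) hck)
      (mul_ne_zero hcj hcj')
  have hd3 : (X + 1) * Kf * Jf * (Pck * (a + b + 1 / 2 + X)) * Pcj ≠ 0 :=
    mul_ne_zero (mul_ne_zero (mul_ne_zero (mul_ne_zero hk1 hfk) hfj)
      (mul_ne_zero hck hck')) hcj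
  simp only [mul_div_assoc']
  rw [div_sub_div _ _ hd1 hd2, div_sub_div _ _ hd3 hd2,
    div_eq_div_iff (mul_ne_zero hd1 hd2) (mul_ne_zero hd3 hd2)]
  ring

/-- The key local (WZ/Zeilberger-certified) identity. -/
lemma key (a b : ℂ) (h1 : ∀ n : ℕ, a + b + 1 / 2 + n ≠ 0) (k j : ℕ) :
    (2 * a + ((k : ℂ) + j)) * (2 * b + ((k : ℂ) + j)) * (a + b + ((k : ℂ) + j)) * Fc a b k j
      - (((k : ℂ) + j) + 1) * (2 * a + 2 * b + ((k : ℂ) + j)) * (a + b + 1 / 2 + ((k : ℂ) + j))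
        * Fc a b k (j + 1)
    = qq a b (k + j) (k + 1) * Fc a b (k + 1) j - qq a b (k + j) k * Fc a b k (j + 1) := by
  have hck : poch (a + b + 1 / 2) k ≠ 0 := poch_ne_zero h1 k
  have hcj : poch (a + b + 1 / 2) j ≠ 0 := poch_ne_zero h1 j
  have hfk := fact_ne_zero k
  have hfj := fact_ne_zero j
  have hk1 : ((k : ℂ) + 1) ≠ 0 := Nat.cast_add_one_ne_zero k
  have hj1 : ((j : ℂ) + 1) ≠ 0 := Nat.cast_add_one_ne_zero j
  have h := key_abstract a b (poch a k) (poch b k) (poch a j) (poch b j)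
    (poch (a + b + 1 / 2) k) (poch (a + b + 1 / 2) j)
    ((Nat.factorial k : ℕ) : ℂ) ((Nat.factorial j : ℕ) : ℂ) (k : ℂ) (j : ℂ)
    hck hcj hfk hfj hk1 hj1 (h1 j) (h1 k)
  simp only [Fc, qq, poch_succ, Nat.factorial_succ, Nat.cast_mul, Nat.cast_add, Nat.cast_one]
  convert h using 2

/-- The first-order recurrence for the Cauchy product coefficients. -/
lemma Dd_rec (a b : ℂ) (h1 : ∀ n : ℕ, a + b + 1 / 2 + n ≠ 0) (n : ℕ) :
    (2 * a + n) * (2 * b + n) * (a + b + n) * Dd a b n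
      = ((n : ℂ) + 1) * (2 * a + 2 * b + n) * (a + b + 1 / 2 + n) * Dd a b (n + 1) := by
  classical
  set A : ℂ := (2 * a + n) * (2 * b + n) * (a + b + n) with hA
  set B : ℂ := ((n : ℂ) + 1) * (2 * a + 2 * b + n) * (a + b + 1 / 2 + n) with hB
  set G : ℕ → ℂ := fun k => qq a b n k * Fc a b k (n + 1 - k) with hG
  have tele : ∑ k ∈ Finset.range (n + 1), (G (k + 1) - G k) = G (n + 1) - G 0 :=
    Finset.sum_range_sub G (n + 1)
  have hsum : ∑ k ∈ Finset.range (n + 1),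
      (A * Fc a b k (n - k) - B * Fc a b k (n + 1 - k)) = G (n + 1) - G 0 := by
    rw [← tele]
    apply Finset.sum_congr rfl
    intro k hk
    have hkn : k ≤ n := Nat.lt_succ_iff.mp (Finset.mem_range.mp hk)
    have hnk : k + (n - k) = n := Nat.add_sub_cancel' hkn
    have hcast : ((k : ℂ) + ((n - k : ℕ) : ℂ)) = (n : ℂ) := by
      rw [← Nat.cast_add, hnk]
    have h := key a b h1 k (n - k)
    rw [hnk, hcast] at h
    have e1 : n + 1 - k = n - k + 1 := by omega
    have e2 : n + 1 - (k + 1) = n - k := by omega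
    simp only [hG, hA, hB]
    rw [e1, e2]
    exact h
  have hG0 : G 0 = 0 := by simp [hG, qq]
  have hqB : qq a b n (n + 1) = B := by
    simp only [qq, hB, Nat.cast_add, Nat.cast_one]
    ring
  have hGn1 : G (n + 1) = B * Fc a b (n + 1) 0 := by
    simp only [hG, Nat.sub_self, hqB]
  have hDn1 : Dd a b (n + 1) = (∑ k ∈ Finset.range (n + 1), Fc a b k (n + 1 - k))
      + Fc a b (n + 1) 0 := by
    have h := Finset.sum_range_succ (fun k => Fc a b k (n + 1 - k)) (n + 1)
    simpa [Dd] using h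
  have hL : ∑ k ∈ Finset.range (n + 1),
      (A * Fc a b k (n - k) - B * Fc a b k (n + 1 - k))
      = A * Dd a b n - B * (Dd a b (n + 1) - Fc a b (n + 1) 0) := by
    rw [Finset.sum_sub_distrib, ← Finset.mul_sum, ← Finset.mul_sum, hDn1]
    simp only [Dd]
    ring
  rw [hL, hG0, hGn1] at hsum
  linear_combination hsum

set_option maxHeartbeats 1000000 in
/-- The closed form satisfies the same recurrence. -/
lemma Cc_rec (a b : ℂ) (h1 : ∀ n : ℕ, a + b + 1 / 2 + n ≠ 0)
    (h2 : ∀ n : ℕ, 2 * a + 2 * b + n ≠ 0) (n : ℕ) :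
    (2 * a + n) * (2 * b + n) * (a + b + n) * Cc a b n
      = ((n : ℂ) + 1) * (2 * a + 2 * b + n) * (a + b + 1 / 2 + n) * Cc a b (n + 1) := by
  have hcn : poch (a + b + 1 / 2) n ≠ 0 := poch_ne_zero h1 n
  have hsn : poch (2 * a + 2 * b) n ≠ 0 := poch_ne_zero h2 n
  have hfn := fact_ne_zero n
  have hn1 : ((n : ℂ) + 1) ≠ 0 := Nat.cast_add_one_ne_zero n
  have hcn' : a + b + 1 / 2 + n ≠ 0 := h1 n
  have hsn' : 2 * a + 2 * b + n ≠ 0 := h2 n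
  have hd1 : (Nat.factorial n : ℂ) * poch (2 * a + 2 * b) n * poch (a + b + 1 / 2) n ≠ 0 :=
    mul_ne_zero (mul_ne_zero hfn hsn) hcn
  have hd2 : (((n : ℂ) + 1) * (Nat.factorial n : ℂ))
      * (poch (2 * a + 2 * b) n * (2 * a + 2 * b + n))
      * (poch (a + b + 1 / 2) n * (a + b + 1 / 2 + n)) ≠ 0 :=
    mul_ne_zero (mul_ne_zero (mul_ne_zero hn1 hfn) (mul_ne_zero hsn hsn'))
      (mul_ne_zero hcn hcn')
  simp only [Cc, poch_succ, Nat.factorial_succ, Nat.cast_mul, Nat.cast_add, Nat.cast_one]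
  rw [mul_div_assoc', mul_div_assoc', div_eq_div_iff hd1 (by
    exact mul_ne_zero (mul_ne_zero (mul_ne_zero hn1 hfn) (mul_ne_zero hsn hsn'))
      (mul_ne_zero hcn hcn'))]
  ring
  
lemma Dd_eq_Cc (a b : ℂ) (h1 : ∀ n : ℕ, a + b + 1 / 2 + n ≠ 0)
    (h2 : ∀ n : ℕ, 2 * a + 2 * b + n ≠ 0) (n : ℕ) : Dd a b n = Cc a b n := by
  induction n with
  | zero => simp [Dd, Cc, Fc, poch]
  | succ m ih =>
      have hB : ((m : ℂ) + 1) * (2 * a + 2 * b + m) * (a + b + 1 / 2 + m) ≠ 0 :=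
        mul_ne_zero (mul_ne_zero (Nat.cast_add_one_ne_zero m) (h2 m)) (h1 m)
      apply mul_left_cancel₀ hB
      rw [← Dd_rec a b h1 m, ← Cc_rec a b h1 h2 m, ih]

lemma summable_norm_term (a b : ℂ) (h1 : ∀ n : ℕ, a + b + 1 / 2 + n ≠ 0)
    (z : ℂ) (hz : ‖z‖ < 1) :
    Summable (fun n : ℕ =>
      ‖poch a n * poch b n / poch (a + b + 1 / 2) n * z ^ n / (Nat.factorial n : ℂ)‖) := by
  set c : ℂ := a + b + 1 / 2 with hc
  set t : ℕ → ℂ := fun n => poch a n * poch b n / poch c n * z ^ n / (Nat.factorial n : ℂ)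
    with ht
  show Summable (fun n : ℕ => ‖t n‖)
  set u : ℕ → ℂ := fun n => (a + n) * (b + n) / ((c + n) * ((n : ℂ) + 1)) * z with hu
  have hrat : ∀ n : ℕ, t (n + 1) = t n * u n := by
    intro n
    have hcn : poch c n ≠ 0 := poch_ne_zero h1 n
    have hfn := fact_ne_zero n
    have hn1 : ((n : ℂ) + 1) ≠ 0 := Nat.cast_add_one_ne_zero n
    have hcn' : c + n ≠ 0 := h1 n
    simp only [ht, hu, poch_succ, Nat.factorial_succ, Nat.cast_mul, Nat.cast_add, Nat.cast_one,
      pow_succ]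
    field_simp
  have h₁ : Filter.Tendsto (fun n : ℕ => (a - 1) / ((n : ℂ) + 1)) Filter.atTop (nhds 0) := by
    rw [tendsto_zero_iff_norm_tendsto_zero]
    have hE : (fun n : ℕ => ‖(a - 1) / ((n : ℂ) + 1)‖)
        = fun n : ℕ => ‖a - 1‖ / ‖(n : ℂ) + 1‖ := by
      funext n; rw [norm_div]
    rw [hE]
    apply Filter.Tendsto.div_atTop tendsto_const_nhds
    have heq : (fun n : ℕ => ‖(n : ℂ) + 1‖) = fun n : ℕ => (n : ℝ) + 1 := by
      funext n
      rw [show ((n : ℂ) + 1) = ((n + 1 : ℕ) : ℂ) by push_cast; ring, Complex.norm_natCast]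
      push_cast; ring
    rw [heq]
    exact Filter.tendsto_atTop_add_const_right _ _ tendsto_natCast_atTop_atTop
  have h₂ : Filter.Tendsto (fun n : ℕ => (b - c) / (c + (n : ℂ))) Filter.atTop (nhds 0) := by
    rw [tendsto_zero_iff_norm_tendsto_zero]
    have hE : (fun n : ℕ => ‖(b - c) / (c + (n : ℂ))‖)
        = fun n : ℕ => ‖b - c‖ / ‖c + (n : ℂ)‖ := by
      funext n; rw [norm_div]
    rw [hE]
    apply Filter.Tendsto.div_atTop tendsto_const_nhds
    apply Filter.tendsto_atTop_mono (fun n : ℕ => ?_)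
      (Filter.tendsto_atTop_add_const_right _ (-‖c‖) tendsto_natCast_atTop_atTop)
    have h0 : ((n : ℝ)) = ‖((n : ℕ) : ℂ)‖ := by rw [Complex.norm_natCast]
    have htri : ‖((n : ℕ) : ℂ)‖ ≤ ‖c + (n : ℂ)‖ + ‖c‖ := by
      calc ‖((n : ℕ) : ℂ)‖ = ‖(c + (n : ℂ)) - c‖ := by ring_nf
        _ ≤ ‖c + (n : ℂ)‖ + ‖c‖ := norm_sub_le _ _
    rw [h0]
    linarith [htri]
  have hmain : Filter.Tendsto (fun n : ℕ => ‖u n‖) Filter.atTop (nhds ‖z‖) := by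
    have hfeq : ∀ n : ℕ, (1 + (a - 1) / ((n : ℂ) + 1)) * (1 + (b - c) / (c + (n : ℂ))) * z
        = u n := by
      intro n
      have hn1 : ((n : ℂ) + 1) ≠ 0 := Nat.cast_add_one_ne_zero n
      have hcn' : c + n ≠ 0 := h1 n
      simp only [hu]
      field_simp
      ring
    have hten : Filter.Tendsto (fun n : ℕ =>
        (1 + (a - 1) / ((n : ℂ) + 1)) * (1 + (b - c) / (c + (n : ℂ))) * z)
        Filter.atTop (nhds ((1 + 0) * (1 + 0) * z)) :=
      ((tendsto_const_nhds.add h₁).mul (tendsto_const_nhds.add h₂)).mul tendsto_const_nhds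
    simp only [add_zero, one_mul] at hten
    exact (Filter.Tendsto.congr hfeq hten).norm
  set r : ℝ := (1 + ‖z‖) / 2 with hr
  have hr1 : r < 1 := by rw [hr]; linarith
  have hzr : ‖z‖ < r := by rw [hr]; linarith
  have hev : ∀ᶠ n in Filter.atTop, ‖u n‖ < r := hmain.eventually_lt_const hzr
  apply summable_of_ratio_norm_eventually_le hr1
  filter_upwards [hev] with n hn
  simp only [norm_norm]
  rw [hrat n, norm_mul]
  nlinarith [norm_nonneg (u n), norm_nonneg (t n)]

end ClausenAux

open ClausenAux in
/-- **Clausen's formula**: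
`(₂F₁(a, b; a+b+1/2; z))² = ₃F₂(2a, 2b, a+b; 2a+2b, a+b+1/2; z)` for `|z| < 1`. -/
theorem clausen_formula (a b : ℂ)
    (h1 : ∀ n : ℕ, a + b + 1 / 2 + n ≠ 0) (h2 : ∀ n : ℕ, 2 * a + 2 * b + n ≠ 0)
    (z : ℂ) (hz : ‖z‖ < 1) :
    (F21 a b (a + b + 1 / 2) z) ^ 2
      = F32 (2 * a) (2 * b) (a + b) (2 * a + 2 * b) (a + b + 1 / 2) z := by
  have hz' : ‖z‖ < 1 := hz
  have hsum := summable_norm_term a b h1 z hz'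
  have cauchy := tsum_mul_tsum_eq_tsum_sum_range_of_summable_norm hsum hsum
  rw [F21, F32, pow_two, cauchy]
  apply tsum_congr
  intro n
  have hterm : (∑ k ∈ Finset.range (n + 1),
      (poch a k * poch b k / poch (a + b + 1 / 2) k * z ^ k / (Nat.factorial k : ℂ)) *
      (poch a (n - k) * poch b (n - k) / poch (a + b + 1 / 2) (n - k) * z ^ (n - k)
        / (Nat.factorial (n - k) : ℂ)))
      = z ^ n * Dd a b n := by
    rw [Dd, Finset.mul_sum]
    apply Finset.sum_congr rfl
    intro k hk
    have hkn : k ≤ n := Nat.lt_succ_iff.mp (Finset.mem_range.mp hk)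
    have hnk : k + (n - k) = n := Nat.add_sub_cancel' hkn
    simp only [Fc]
    rw [show z ^ n = z ^ k * z ^ (n - k) from by rw [← pow_add, hnk]]
    ring
  rw [hterm, Dd_eq_Cc a b h1 h2 n, Cc]
  ring
end
end

section
/- For all natural numbers n ≥ 0 one has (1/6)_n · (5/6)_n · (1/2)_n = (6n)! / ((3n)! · 12^{3n}), and consequently (₂F₁(1/12, 5/12; 1; z))² = Σ_{n≥0} (6n)!/((3n)!(n!)³) · zⁿ/12^{3n} for |z| < 1. -/
open Complex

noncomputable section

lemma poch_succ (a : ℂ) (n : ℕ) : poch a (n+1) = poch a n * (a + n) := rfl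

lemma poch_one_eq (n : ℕ) : poch 1 n = n.factorial := by
  induction n with
  | zero => simp [poch]
  | succ n ih => rw [poch_succ, ih, Nat.factorial_succ]; push_cast; ring

def uu (k : ℕ) : ℂ := poch (1/12) k * poch (5/12) k / (k.factorial : ℂ)^2
def ww (k : ℕ) : ℂ := poch (1/12) k * poch (5/12) k / ((k+1).factorial : ℂ)^2

lemma uu_zero : uu 0 = 1 := by simp [uu, poch]
lemma uu_one : uu 1 = 5/144 := by
  simp [uu, poch]
  norm_num
lemma ww_zero : ww 0 = 1 := by simp [ww, poch]

lemma uu_ww (k : ℕ) : uu k = ww k * ((k:ℂ)+1)^2 := by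
  have h : ((k:ℂ)+1) ≠ 0 := Nat.cast_add_one_ne_zero k
  have hf : ((k.factorial : ℂ)) ≠ 0 := Nat.cast_ne_zero.2 k.factorial_ne_zero
  simp only [uu, ww, Nat.factorial_succ]
  push_cast
  field_simp

lemma ww_mul (k : ℕ) : uu (k+1) = ww k * ((1/12+(k:ℂ))*(5/12+(k:ℂ))) := by
  simp only [uu, ww, poch_succ]
  ring

lemma ww_rel (m : ℕ) : ww m * ((1/12+(m:ℂ))*(5/12+(m:ℂ))) = ww (m+1) * ((m:ℂ)+2)^2 := by
  have h1 := ww_mul m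
  have h2 := uu_ww (m+1)
  push_cast at h2
  linear_combination -h1 + h2

def Pc (n k : ℂ) : ℂ :=
  2*k^3 - (7*n+4)*k^2 + (8*n^2 + 17/2*n + 113/72)*k - (3*n^3 + 9/2*n^2 + 77/48*n + 5/48)

def Dc (n : ℂ) : ℂ := (n + 1/6) * (n + 5/6) * (n + 1/2)

def hW (n k : ℕ) : ℂ := (k:ℂ)^2 * Pc n k * uu k * ww (n - k)

lemma hW_zero (n : ℕ) : hW n 0 = 0 := by simp [hW]

lemma keyA (k m : ℕ) :
    (1/12+(m:ℂ)) * (5/12+(m:ℂ)) *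
      ((((k+1+m:ℕ):ℂ)+1)^3 * (uu k * uu (m+2)) - Dc ((k+1+m:ℕ):ℂ) * (uu k * uu (m+1)))
    = (1/12+(m:ℂ)) * (5/12+(m:ℂ)) * (hW (k+1+m) (k+1) - hW (k+1+m) k) := by
  have e1 : uu (m+2) = ww (m+1) * ((13/12+(m:ℂ))*(17/12+(m:ℂ))) := by
    rw [show m+2 = m+1+1 from rfl, ww_mul (m+1)]
    push_cast
    ring
  have e2 : uu (m+1) = ww (m+1) * ((m:ℂ)+2)^2 := by
    rw [uu_ww (m+1)]; push_cast; ring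
  have e3 : uu (k+1) = ww k * ((1/12+(k:ℂ))*(5/12+(k:ℂ))) := ww_mul k
  have e4 : uu k = ww k * ((k:ℂ)+1)^2 := uu_ww k
  have rel := ww_rel m
  simp only [hW]
  rw [show (k+1+m)-(k+1) = m from by omega, show (k+1+m)-k = m+1 from by omega]
  rw [e1, e2, e3, e4]
  simp only [Pc, Dc]
  push_cast
  linear_combination (-1 : ℂ) * (((k:ℂ)+1)^2 * (2*((k:ℂ)+1)^3 - (7*((k:ℂ)+1+(m:ℂ))+4)*((k:ℂ)+1)^2 + (8*((k:ℂ)+1+(m:ℂ))^2 + 17/2*((k:ℂ)+1+(m:ℂ)) + 113/72)*((k:ℂ)+1) - (3*((k:ℂ)+1+(m:ℂ))^3 + 9/2*((k:ℂ)+1+(m:ℂ))^2 + 77/48*((k:ℂ)+1+(m:ℂ)) + 5/48)) * (ww k * ((1/12+(k:ℂ))*(5/12+(k:ℂ))))) * rel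

lemma keyB (n : ℕ) :
    ((n:ℂ)+1)^3 * (uu n * uu 1) - Dc n * (uu n * uu 0)
      = -((n:ℂ)+1)^3 * uu (n+1) - hW n n := by
  simp only [hW, Nat.sub_self, ww_zero]
  rw [uu_ww n, ww_mul n, uu_zero, uu_one]
  simp only [Pc, Dc]
  ring

lemma keyS (n : ℕ) :
    ((n:ℂ)+1)^3 * (∑ k ∈ Finset.range (n+2), uu k * uu (n+1-k))
      = Dc n * (∑ k ∈ Finset.range (n+1), uu k * uu (n-k)) := by
  have hsplit : ∑ k ∈ Finset.range (n+2), uu k * uu (n+1-k)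
      = (∑ k ∈ Finset.range (n+1), uu k * uu (n+1-k)) + uu (n+1) * uu 0 := by
    rw [Finset.sum_range_succ, Nat.sub_self]
  have main : ∀ k ∈ Finset.range n,
      ((n:ℂ)+1)^3 * (uu k * uu (n+1-k)) - Dc n * (uu k * uu (n-k)) = hW n (k+1) - hW n k := by
    intro k hk
    rw [Finset.mem_range] at hk
    obtain ⟨m, rfl⟩ : ∃ m, n = k+1+m := ⟨n-(k+1), by omega⟩
    have c1 : (1/12+(m:ℂ)) ≠ 0 := by
      intro h
      refine (Nat.cast_ne_zero (R := ℂ)).2 (show 12*m+1 ≠ 0 by omega) ?_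
      push_cast
      linear_combination 12*h
    have c2 : (5/12+(m:ℂ)) ≠ 0 := by
      intro h
      refine (Nat.cast_ne_zero (R := ℂ)).2 (show 12*m+5 ≠ 0 by omega) ?_
      push_cast
      linear_combination 12*h
    rw [show k+1+m+1-k = m+2 from by omega, show k+1+m-k = m+1 from by omega]
    exact mul_left_cancel₀ (mul_ne_zero c1 c2) (keyA k m)
  have tele : ∑ k ∈ Finset.range n,
      (((n:ℂ)+1)^3 * (uu k * uu (n+1-k)) - Dc n * (uu k * uu (n-k))) = hW n n - hW n 0 := by
    rw [Finset.sum_congr rfl main]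
    exact Finset.sum_range_sub (hW n) n
  have last : ((n:ℂ)+1)^3 * (uu n * uu (n+1-n)) - Dc n * (uu n * uu (n-n))
      = -((n:ℂ)+1)^3 * uu (n+1) - hW n n := by
    rw [show n+1-n = 1 from by omega, Nat.sub_self]
    exact keyB n
  have expand : ∑ k ∈ Finset.range (n+1),
      (((n:ℂ)+1)^3 * (uu k * uu (n+1-k)) - Dc n * (uu k * uu (n-k)))
      = hW n n - hW n 0 + (-((n:ℂ)+1)^3 * uu (n+1) - hW n n) := by
    rw [Finset.sum_range_succ, tele, last]
  rw [Finset.sum_sub_distrib, hW_zero, ← Finset.mul_sum, ← Finset.mul_sum] at expand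
  rw [hsplit, uu_zero, mul_one]
  linear_combination expand

lemma clausen (n : ℕ) : ∑ k ∈ Finset.range (n+1), uu k * uu (n-k)
    = poch (1/6) n * poch (5/6) n * poch (1/2) n / ((n.factorial : ℂ))^3 := by
  induction n with
  | zero => simp [uu, poch]
  | succ n ih =>
    have key := keyS n
    rw [ih] at key
    have h1 : (((n:ℂ)+1))^3 ≠ 0 := pow_ne_zero _ (Nat.cast_add_one_ne_zero n)
    apply mul_left_cancel₀ h1
    rw [key]
    have hf : ((n.factorial : ℂ)) ≠ 0 := Nat.cast_ne_zero.2 n.factorial_ne_zero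
    have hn1 : ((n:ℂ)+1) ≠ 0 := Nat.cast_add_one_ne_zero n
    simp only [poch_succ, Dc, Nat.factorial_succ]
    push_cast
    field_simp
    ring
lemma part1 (n : ℕ) : poch (1/6) n * poch (5/6) n * poch (1/2) n
    = (Nat.factorial (6 * n) : ℂ) / ((Nat.factorial (3 * n) : ℂ) * 12 ^ (3 * n)) := by
  induction n with
  | zero => simp [poch]
  | succ n ih =>
    have h6 : 6 * (n+1) = (6*n+5) + 1 := by ring
    have h3 : 3 * (n+1) = (3*n+2) + 1 := by ring
    have e6 : (Nat.factorial (6*(n+1)) : ℂ)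
        = (Nat.factorial (6*n) : ℂ) * (6*n+1) * (6*n+2) * (6*n+3) * (6*n+4) * (6*n+5) * (6*n+6) := by
      rw [h6]
      simp only [Nat.factorial_succ]
      push_cast
      ring
    have e3 : (Nat.factorial (3*(n+1)) : ℂ)
        = (Nat.factorial (3*n) : ℂ) * (3*n+1) * (3*n+2) * (3*n+3) := by
      rw [h3]
      simp only [Nat.factorial_succ]
      push_cast
      ring
    have e12 : ((12:ℂ)) ^ (3*(n+1)) = 12 ^ (3*n) * 12^3 := by
      rw [show 3*(n+1) = 3*n + 3 by ring, pow_add]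
    have hf3 : ((Nat.factorial (3*n)) : ℂ) ≠ 0 := Nat.cast_ne_zero.2 (Nat.factorial_ne_zero _)
    have h12 : ((12:ℂ)) ^ (3*n) ≠ 0 := pow_ne_zero _ (by norm_num)
    calc poch (1/6) (n+1) * poch (5/6) (n+1) * poch (1/2) (n+1)
        = (poch (1/6) n * poch (5/6) n * poch (1/2) n)
            * ((1/6+(n:ℂ))*(5/6+(n:ℂ))*(1/2+(n:ℂ))) := by
          simp only [poch_succ]; ring
      _ = ((Nat.factorial (6*n) : ℂ) / ((Nat.factorial (3*n) : ℂ) * 12 ^ (3*n)))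
            * ((1/6+(n:ℂ))*(5/6+(n:ℂ))*(1/2+(n:ℂ))) := by rw [ih]
      _ = (Nat.factorial (6*(n+1)) : ℂ) / ((Nat.factorial (3*(n+1)) : ℂ) * 12 ^ (3*(n+1))) := by
          have c1 : ((3*(n:ℂ)+1)) ≠ 0 := by
            have : ((3*n+1 : ℕ):ℂ) ≠ 0 := Nat.cast_ne_zero.2 (by omega)
            push_cast at this; exact this
          have c2 : ((3*(n:ℂ)+2)) ≠ 0 := by
            have : ((3*n+2 : ℕ):ℂ) ≠ 0 := Nat.cast_ne_zero.2 (by omega)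
            push_cast at this; exact this
          have c3 : ((3*(n:ℂ)+3)) ≠ 0 := by
            have : ((3*n+3 : ℕ):ℂ) ≠ 0 := Nat.cast_ne_zero.2 (by omega)
            push_cast at this; exact this
          have hb : ((Nat.factorial (3*n) : ℂ) * 12 ^ (3*n)) ≠ 0 := mul_ne_zero hf3 h12
          have hd : ((Nat.factorial (3*n) : ℂ) * (3*(n:ℂ)+1) * (3*(n:ℂ)+2) * (3*(n:ℂ)+3)
              * (12 ^ (3*n) * 12^3)) ≠ 0 := by
            refine mul_ne_zero (mul_ne_zero (mul_ne_zero (mul_ne_zero hf3 c1) c2) c3) ?_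
            exact mul_ne_zero h12 (by norm_num)
          rw [e6, e3, e12, div_mul_eq_mul_div, div_eq_div_iff hb hd]
          ring

lemma abs_poch_le (c : ℝ) (h0 : 0 ≤ c) (h1 : c ≤ 1) (n : ℕ) :
    ‖poch (c:ℂ) n‖ ≤ n.factorial := by
  induction n with
  | zero => simp [poch]
  | succ n ih =>
    rw [poch_succ, norm_mul, Nat.factorial_succ]
    have habs : ‖(c:ℂ) + (n:ℂ)‖ = c + n := by
      rw [show ((c:ℂ) + (n:ℂ)) = ((c + n : ℝ) : ℂ) by push_cast; ring, Complex.norm_real, Real.norm_eq_abs]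
      exact abs_of_nonneg (by positivity)
    rw [habs]
    push_cast
    have hb : c + (n:ℝ) ≤ (n:ℝ) + 1 := by linarith
    calc ‖poch (c:ℂ) n‖ * (c + (n:ℝ))
        ≤ (n.factorial : ℝ) * ((n:ℝ) + 1) := by
          apply mul_le_mul ih hb (by positivity) (by positivity)
      _ = ((n:ℝ) + 1) * (n.factorial : ℝ) := by ring

lemma uu_abs (n : ℕ) : ‖uu n‖ ≤ 1 := by
  have h1 : ‖poch (1/12) n‖ ≤ n.factorial := by
    have := abs_poch_le (1/12 : ℝ) (by norm_num) (by norm_num) n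
    rwa [show (((1/12:ℝ)):ℂ) = (1/12 : ℂ) by norm_num] at this
  have h2 : ‖poch (5/12) n‖ ≤ n.factorial := by
    have := abs_poch_le (5/12 : ℝ) (by norm_num) (by norm_num) n
    rwa [show (((5/12:ℝ)):ℂ) = (5/12 : ℂ) by norm_num] at this
  have hf : (0:ℝ) < (n.factorial : ℝ) := by exact_mod_cast n.factorial_pos
  have : ‖uu n‖
      = ‖poch (1/12) n‖ * ‖poch (5/12) n‖ / (n.factorial : ℝ)^2 := by
    simp [uu, norm_div, norm_mul, norm_pow, Complex.norm_natCast]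
  rw [this]
  rw [div_le_one (by positivity)]
  calc ‖poch (1/12) n‖ * ‖poch (5/12) n‖
      ≤ (n.factorial : ℝ) * (n.factorial : ℝ) := by
        apply mul_le_mul h1 h2 (norm_nonneg _) (by positivity)
    _ = (n.factorial : ℝ)^2 := by ring

/-- `(1/6)_n (5/6)_n (1/2)_n = (6n)!/((3n)!·12^{3n})`, and consequently
`(₂F₁(1/12, 5/12; 1; z))² = Σ_{n≥0} (6n)!/((3n)!(n!)³) · zⁿ/12^{3n}` for `|z| < 1`. -/
theorem poch_prod_eq_and_F21_sq (z : ℂ) (hz : ‖z‖ < 1) :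
    (∀ n : ℕ, poch (1 / 6) n * poch (5 / 6) n * poch (1 / 2) n
        = (Nat.factorial (6 * n) : ℂ) / ((Nat.factorial (3 * n) : ℂ) * 12 ^ (3 * n))) ∧
    (F21 (1 / 12) (5 / 12) 1 z) ^ 2
      = ∑' n : ℕ, (Nat.factorial (6 * n) : ℂ)
          / ((Nat.factorial (3 * n) : ℂ) * (Nat.factorial n : ℂ) ^ 3)
          * z ^ n / 12 ^ (3 * n) := by
  refine ⟨part1, ?_⟩
  have hF : F21 (1/12) (5/12) 1 z = ∑' n : ℕ, uu n * z ^ n := by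
    unfold F21
    refine tsum_congr fun n => ?_
    rw [poch_one_eq, uu]
    ring
  have hsumm : Summable (fun n : ℕ => ‖uu n * z ^ n‖) := by
    refine Summable.of_nonneg_of_le (fun n => norm_nonneg _) (fun n => ?_)
      (summable_geometric_of_lt_one (norm_nonneg z) hz)
    rw [norm_mul, norm_pow]
    calc ‖uu n‖ * ‖z‖ ^ n ≤ 1 * ‖z‖ ^ n := by
          apply mul_le_mul_of_nonneg_right (uu_abs n) (by positivity)
      _ = ‖z‖ ^ n := by rw [one_mul]
  have cauchy : (∑' n : ℕ, uu n * z ^ n) * (∑' n : ℕ, uu n * z ^ n)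
      = ∑' n : ℕ, ∑ k ∈ Finset.range (n+1), (uu k * z ^ k) * (uu (n-k) * z ^ (n-k)) :=
    tsum_mul_tsum_eq_tsum_sum_range_of_summable_norm hsumm hsumm
  rw [hF, sq, cauchy]
  refine tsum_congr fun n => ?_
  have hs : ∑ k ∈ Finset.range (n+1), (uu k * z ^ k) * (uu (n-k) * z ^ (n-k))
      = (∑ k ∈ Finset.range (n+1), uu k * uu (n-k)) * z ^ n := by
    rw [Finset.sum_mul]
    refine Finset.sum_congr rfl fun k hk => ?_
    rw [Finset.mem_range] at hk
    have : z ^ k * z ^ (n-k) = z ^ n := by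
      rw [← pow_add, Nat.add_sub_cancel' (Nat.lt_succ_iff.1 hk)]
    calc (uu k * z ^ k) * (uu (n-k) * z ^ (n-k)) = uu k * uu (n-k) * (z ^ k * z ^ (n-k)) := by ring
      _ = uu k * uu (n-k) * z ^ n := by rw [this]
  rw [hs, clausen n, part1 n]
  ring
end
end
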